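/- arXiv:0712.3112 — 3 statements merged into one kernel-verified Lean document; each statement's English description precedes it below -/
import Mathlib

section
/- Let G = (V, E) be a finite multigraph and let e ∈ E be any edge. Then the edge elimination polynomial satisfies the recurrence ξ(G, x, y, z) = ξ(G_{−e}, x, y, z) + y·ξ(G_{/e}, x, y, z) + z·ξ(G_{†e}, x, y, z), as an identity in the polynomial ring ℤ[x, y, z]. -/
/-- A finite multigraph: finite vertex and edge types, each edge assigned an
unordered pair of (not necessarily distinct) endpoints. -/
structure Multigraph where
  V : Type
  E : Type
  [fintypeV : Fintype V]
  [decEqV : DecidableEq V]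
  [fintypeE : Fintype E]
  [decEqE : DecidableEq E]
  ends : E → Sym2 V

namespace Multigraph

attribute [instance] fintypeV decEqV fintypeE decEqE

/-- The empty multigraph. -/
def emptyGraph : Multigraph where
  V := Empty
  E := Empty
  ends := fun e => e.elim

/-- The one-vertex multigraph `E₁` with no edges. -/
def singleVertex : Multigraph where
  V := Unit
  E := Empty
  ends := fun e => e.elim

/-- Disjoint union of multigraphs. -/
def disjUnion (G₁ G₂ : Multigraph) : Multigraph where
  V := G₁.V ⊕ G₂.V
  E := G₁.E ⊕ G₂.E
  ends := Sum.elim (fun e => (G₁.ends e).map Sum.inl) (fun e => (G₂.ends e).map Sum.inr)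

/-- Deletion of an edge. -/
def deleteEdge (G : Multigraph) (e : G.E) : Multigraph where
  V := G.V
  E := {e' : G.E // e' ≠ e}
  ends := fun e' => G.ends e'.val

/-- Contraction of an edge: its endpoints are identified
(replaced by a single new vertex) and the edge is removed. -/
def contractEdge (G : Multigraph) (e : G.E) : Multigraph where
  V := {v : G.V // v ∉ G.ends e} ⊕ Unit
  E := {e' : G.E // e' ≠ e}
  ends := fun e' => (G.ends e'.val).map
    (fun v => if h : v ∈ G.ends e then Sum.inr () else Sum.inl ⟨v, h⟩)

/-- Extraction of an edge: both endpoints are deleted together with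
all incident edges. -/
def extractEdge (G : Multigraph) (e : G.E) : Multigraph where
  V := {v : G.V // v ∉ G.ends e}
  E := {e' : G.E // ∀ v : G.V, v ∈ G.ends e' → v ∉ G.ends e}
  ends := fun e' => (G.ends e'.val).attachWith (fun v hv => e'.prop v hv)

/-- Deletion of a vertex (together with all incident edges). -/
def deleteVertex (G : Multigraph) (v : G.V) : Multigraph where
  V := {w : G.V // w ≠ v}
  E := {e : G.E // v ∉ G.ends e}
  ends := fun e => (G.ends e.val).attachWith
    (fun w hw => fun hwv => e.prop (hwv ▸ hw))

/-- Number of connected components of the spanning subgraph `(V, S)`. -/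
noncomputable def k (G : Multigraph) (S : Finset G.E) : ℕ :=
  Nat.card (Quot (fun u v : G.V => ∃ e ∈ S, G.ends e = s(u, v)))

/-- Number of connected components of `(V(S), S)`, the graph on the vertices
covered by `S`. -/
noncomputable def kcov (G : Multigraph) (S : Finset G.E) : ℕ :=
  Nat.card (Quot (fun u v : {w : G.V // ∃ e ∈ S, w ∈ G.ends e} =>
    ∃ e ∈ S, G.ends e = s(u.val, v.val)))

/-- `V(A)` and `V(B)` are disjoint. -/
def CovDisjoint (G : Multigraph) (A B : Finset G.E) : Prop :=
  ∀ v : G.V, (∃ e ∈ A, v ∈ G.ends e) → ¬ (∃ e ∈ B, v ∈ G.ends e)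

instance (G : Multigraph) (A B : Finset G.E) : Decidable (G.CovDisjoint A B) := by
  unfold CovDisjoint; infer_instance

/-- The edge elimination polynomial (evaluated at `x y z` in a commutative ring):
`ξ(G,x,y,z) = Σ_{(A ⊔ B) ⊆ E} x^{k(A∪B)-k_cov(B)} y^{|A|+|B|-k_cov(B)} z^{k_cov(B)}`. -/
noncomputable def xi {R : Type*} [CommRing R] (G : Multigraph) (x y z : R) : R :=
  ∑ A : Finset G.E, ∑ B : Finset G.E,
    if G.CovDisjoint A B then
      x ^ (G.k (A ∪ B) - G.kcov B) * y ^ (A.card + B.card - G.kcov B) * z ^ G.kcov B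
    else 0

/-- Isomorphism of multigraphs. -/
structure Iso (G H : Multigraph) where
  vEquiv : G.V ≃ H.V
  eEquiv : G.E ≃ H.E
  ends_map : ∀ e : G.E, H.ends (eEquiv e) = (G.ends e).map vEquiv

end Multigraph

namespace Multigraph

section EdgeElim

variable (G : Multigraph) (e : G.E)

/-- A chosen endpoint of `e`. -/
noncomputable def u0 : G.V := (G.ends e).out.1

lemma u0_mem : G.u0 e ∈ G.ends e := Sym2.out_fst_mem _

/-- Embedding of the edges distinct from `e` into all edges. -/
def embDel : (G.deleteEdge e).E ↪ G.E := Function.Embedding.subtype _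

/-- Embedding of the edges avoiding the endpoints of `e` into all edges. -/
def embExt : (G.extractEdge e).E ↪ G.E := Function.Embedding.subtype _

/-- The projection to the contracted vertex set. -/
def proj : G.V → (G.contractEdge e).V :=
  fun v => if h : v ∈ G.ends e then Sum.inr () else Sum.inl ⟨v, h⟩

lemma contract_ends (f : (G.contractEdge e).E) :
    (G.contractEdge e).ends f = (G.ends f.val).map (G.proj e) := rfl

lemma proj_eq_inr {v : G.V} (h : v ∈ G.ends e) : G.proj e v = Sum.inr () := dif_pos h

lemma proj_eq_inl {v : G.V} (h : v ∉ G.ends e) : G.proj e v = Sum.inl ⟨v, h⟩ := dif_neg h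

lemma proj_eq_inl_iff {v : G.V} {w : {v : G.V // v ∉ G.ends e}} :
    G.proj e v = Sum.inl w ↔ v = w.val := by
  by_cases h : v ∈ G.ends e
  · rw [proj_eq_inr G e h]
    simp only [reduceCtorEq, false_iff]
    rintro rfl; exact w.prop ‹_›
  · rw [proj_eq_inl G e h]
    constructor
    · rintro h; cases h; rfl
    · rintro rfl; rfl

lemma e_notMem_mapDel (S : Finset (G.deleteEdge e).E) : e ∉ S.map (G.embDel e) := by
  rw [Finset.mem_map]
  rintro ⟨f, _, h⟩
  exact f.prop h

lemma extract_ne (f : (G.extractEdge e).E) : f.val ≠ e := by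
  intro h
  refine f.prop (G.u0 e) ?_ (G.u0_mem e)
  rw [h]; exact G.u0_mem e

lemma e_notMem_mapExt (S : Finset (G.extractEdge e).E) : e ∉ S.map (G.embExt e) := by
  rw [Finset.mem_map]
  rintro ⟨f, _, h⟩
  exact G.extract_ne e f h

end EdgeElim

end Multigraph

namespace Multigraph

section Helpers

variable {α : Type*}

lemma sym2_exists (z : Sym2 α) : ∃ x y, z = s(x, y) :=
  Sym2.inductionOn z fun x y => ⟨x, y, rfl⟩

lemma sym2_attachWith_eq {P : α → Prop} {z : Sym2 α} (h : ∀ a ∈ z, P a) {x y : α}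
    (hz : z = s(x, y)) (hx : P x) (hy : P y) :
    z.attachWith h = s(⟨x, hx⟩, ⟨y, hy⟩) := by
  subst hz; rfl

lemma sym2_mem_attachWith {P : α → Prop} {z : Sym2 α} (h : ∀ a ∈ z, P a) (x : {a // P a}) :
    x ∈ z.attachWith h ↔ x.val ∈ z := by
  constructor
  · intro hx
    have := Sym2.mem_map (f := Subtype.val) |>.2 ⟨x, hx, rfl⟩
    rwa [Sym2.attachWith_map_subtypeVal] at this
  · intro hx
    have : x.val ∈ (z.attachWith h).map Subtype.val := by
      rwa [Sym2.attachWith_map_subtypeVal]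
    rcases Sym2.mem_map.1 this with ⟨a, ha, hax⟩
    rwa [Subtype.ext hax] at ha

lemma sym2_attachWith_eq_pair_iff {P : α → Prop} {z : Sym2 α} (h : ∀ a ∈ z, P a)
    {x y : {a // P a}} (hz : z.attachWith h = s(x, y)) : z = s(x.val, y.val) := by
  have := congrArg (Sym2.map Subtype.val) hz
  rwa [Sym2.attachWith_map_subtypeVal, Sym2.map_pair_eq] at this

end Helpers

section QuotHelpers

variable (G : Multigraph)

lemma quot_mk_eq_of_mem {S : Finset G.E} {f : G.E} (hf : f ∈ S) {u v : G.V}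
    (hu : u ∈ G.ends f) (hv : v ∈ G.ends f) :
    Quot.mk (fun u v : G.V => ∃ g ∈ S, G.ends g = s(u, v)) u
      = Quot.mk (fun u v : G.V => ∃ g ∈ S, G.ends g = s(u, v)) v := by
  by_cases huv : u = v
  · rw [huv]
  · exact Quot.sound ⟨f, hf, ((Sym2.mem_and_mem_iff huv).1 ⟨hu, hv⟩)⟩

lemma quot_mk_eq_of_mem' {P : G.V → Prop} {S : Finset G.E} {f : G.E} (hf : f ∈ S)
    {u v : {w : G.V // P w}} (hu : u.val ∈ G.ends f) (hv : v.val ∈ G.ends f) :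
    Quot.mk (fun a b : {w : G.V // P w} => ∃ g ∈ S, G.ends g = s(a.val, b.val)) u
      = Quot.mk (fun a b : {w : G.V // P w} => ∃ g ∈ S, G.ends g = s(a.val, b.val)) v := by
  by_cases huv : u = v
  · rw [huv]
  · have hvv : u.val ≠ v.val := fun h => huv (Subtype.ext h)
    exact Quot.sound ⟨f, hf, ((Sym2.mem_and_mem_iff hvv).1 ⟨hu, hv⟩)⟩

lemma kcov_le_card (S : Finset G.E) : G.kcov S ≤ S.card := by
  classical
  have hcard : Nat.card {f : G.E // f ∈ S} = S.card := by
    simp [Nat.card_eq_fintype_card]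
  rw [kcov, ← hcard]
  refine Nat.card_le_card_of_injective
    (fun c => (⟨c.out.prop.choose, c.out.prop.choose_spec.1⟩ : {f : G.E // f ∈ S})) ?_
  intro c c' h
  simp only [Subtype.mk.injEq] at h
  have h1 := c.out.prop.choose_spec.2
  have h2 := c'.out.prop.choose_spec.2
  rw [h] at h1
  have := quot_mk_eq_of_mem' G (P := fun w => ∃ e ∈ S, w ∈ G.ends e)
    c'.out.prop.choose_spec.1 h1 h2
  rw [c.out_eq, c'.out_eq] at this
  exact this

end QuotHelpers

end Multigraph

namespace Multigraph

section KLemmas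

variable (G : Multigraph) (e : G.E)

lemma k_delete (S : Finset (G.deleteEdge e).E) :
    (G.deleteEdge e).k S = G.k (S.map (G.embDel e)) := by
  refine Nat.card_congr (Quot.congrRight ?_)
  intro u v
  constructor
  · rintro ⟨f, hf, hends⟩
    exact ⟨f.val, Finset.mem_map_of_mem _ hf, hends⟩
  · rintro ⟨f, hf, hends⟩
    rcases Finset.mem_map.1 hf with ⟨g, hg, rfl⟩
    exact ⟨g, hg, hends⟩

lemma k_contract (S : Finset (G.contractEdge e).E) :
    (G.contractEdge e).k S = G.k (insert e (S.map (G.embDel e))) := by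
  classical
  set T := insert e (S.map (G.embDel e)) with hT
  let r : G.V → G.V → Prop := fun u v => ∃ f ∈ T, G.ends f = s(u, v)
  let r' : (G.contractEdge e).V → (G.contractEdge e).V → Prop :=
    fun a b => ∃ f ∈ S, (G.contractEdge e).ends f = s(a, b)
  let q : (G.contractEdge e).V → G.V := Sum.elim Subtype.val (fun _ => G.u0 e)
  have heT : e ∈ T := Finset.mem_insert_self e _
  have hmemT : ∀ g : (G.contractEdge e).E, g ∈ S → g.val ∈ T := fun g hg =>
    Finset.mem_insert_of_mem (Finset.mem_map_of_mem _ hg)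
  have L : ∀ v : G.V, Quot.mk r (q (G.proj e v)) = Quot.mk r v := by
    intro v
    by_cases h : v ∈ G.ends e
    · rw [proj_eq_inr G e h]
      exact quot_mk_eq_of_mem G heT (G.u0_mem e) h
    · rw [proj_eq_inl G e h]; rfl
  have hfwd : ∀ u v, r u v → Quot.mk r' (G.proj e u) = Quot.mk r' (G.proj e v) := by
    rintro u v ⟨f, hf, hends⟩
    rcases Finset.mem_insert.1 hf with rfl | hf'
    · have hu : u ∈ G.ends f := by rw [hends]; exact Sym2.mem_mk_left u v
      have hv : v ∈ G.ends f := by rw [hends]; exact Sym2.mem_mk_right u v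
      rw [proj_eq_inr G f hu, proj_eq_inr G f hv]
    · rcases Finset.mem_map.1 hf' with ⟨g, hg, rfl⟩
      refine Quot.sound ⟨g, hg, ?_⟩
      show (G.ends g.val).map (G.proj e) = _
      rw [show (G.embDel e) g = g.val from rfl] at hends
      rw [hends, Sym2.map_pair_eq]
  have hbwd : ∀ a b, r' a b → Quot.mk r (q a) = Quot.mk r (q b) := by
    rintro a b ⟨g, hg, hends⟩
    obtain ⟨x, y, hxy⟩ := sym2_exists (G.ends g.val)
    have hmap : s(G.proj e x, G.proj e y) = s(a, b) := by
      rw [← Sym2.map_pair_eq, ← hxy, ← contract_ends]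
      exact hends
    have hxyrel : Quot.mk r x = Quot.mk r y :=
      Quot.sound ⟨g.val, hmemT g hg, hxy⟩
    rcases Sym2.eq_iff.1 hmap with ⟨ha, hb⟩ | ⟨hb, ha⟩
    · rw [← ha, ← hb, L x, L y]; exact hxyrel
    · rw [← ha, ← hb, L y, L x]; exact hxyrel.symm
  have equiv : Quot r' ≃ Quot r :=
    { toFun := Quot.lift (fun a => Quot.mk r (q a)) hbwd
      invFun := Quot.lift (fun v => Quot.mk r' (G.proj e v)) hfwd
      left_inv := by
        refine Quot.ind ?_
        rintro (⟨w, hw⟩ | ⟨⟩)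
        · show Quot.mk r' (G.proj e w) = _
          rw [proj_eq_inl G e hw]
        · show Quot.mk r' (G.proj e (G.u0 e)) = _
          rw [proj_eq_inr G e (G.u0_mem e)]
      right_inv := by
        refine Quot.ind ?_
        intro v
        exact L v }
  exact Nat.card_congr equiv

lemma k_extract (S : Finset (G.extractEdge e).E) :
    G.k (insert e (S.map (G.embExt e))) = (G.extractEdge e).k S + 1 := by
  classical
  set T := insert e (S.map (G.embExt e)) with hT
  let r : G.V → G.V → Prop := fun u v => ∃ f ∈ T, G.ends f = s(u, v)
  let r' : (G.extractEdge e).V → (G.extractEdge e).V → Prop :=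
    fun a b => ∃ f ∈ S, (G.extractEdge e).ends f = s(a, b)
  have heT : e ∈ T := Finset.mem_insert_self e _
  have hmemT : ∀ g : (G.extractEdge e).E, g ∈ S → g.val ∈ T := fun g hg =>
    Finset.mem_insert_of_mem (Finset.mem_map_of_mem _ hg)
  have hresp' : ∀ a b, r' a b → Quot.mk r a.val = Quot.mk r b.val := by
    rintro a b ⟨g, hg, hends⟩
    exact Quot.sound ⟨g.val, hmemT g hg, sym2_attachWith_eq_pair_iff _ hends⟩
  have hresp : ∀ u v, r u v →
      (if h : u ∈ G.ends e then (Sum.inr () : Quot r' ⊕ Unit)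
        else Sum.inl (Quot.mk r' ⟨u, h⟩))
      = (if h : v ∈ G.ends e then (Sum.inr () : Quot r' ⊕ Unit)
        else Sum.inl (Quot.mk r' ⟨v, h⟩)) := by
    rintro u v ⟨f, hf, hends⟩
    rcases Finset.mem_insert.1 hf with rfl | hf'
    · have hu : u ∈ G.ends f := by rw [hends]; exact Sym2.mem_mk_left u v
      have hv : v ∈ G.ends f := by rw [hends]; exact Sym2.mem_mk_right u v
      rw [dif_pos hu, dif_pos hv]
    · rcases Finset.mem_map.1 hf' with ⟨g, hg, rfl⟩
      rw [show (G.embExt e) g = g.val from rfl] at hends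
      have hu : u ∉ G.ends e := g.prop u (by rw [hends]; exact Sym2.mem_mk_left u v)
      have hv : v ∉ G.ends e := g.prop v (by rw [hends]; exact Sym2.mem_mk_right u v)
      rw [dif_neg hu, dif_neg hv]
      congr 1
      refine Quot.sound ⟨g, hg, ?_⟩
      show (G.ends g.val).attachWith _ = _
      exact sym2_attachWith_eq _ hends hu hv
  have equiv : Quot r ≃ Quot r' ⊕ Unit :=
    { toFun := Quot.lift (fun v => if h : v ∈ G.ends e then (Sum.inr () : Quot r' ⊕ Unit)
        else Sum.inl (Quot.mk r' ⟨v, h⟩)) hresp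
      invFun := Sum.elim (Quot.lift (fun a => Quot.mk r a.val) hresp')
        (fun _ => Quot.mk r (G.u0 e))
      left_inv := by
        refine Quot.ind ?_
        intro v
        by_cases h : v ∈ G.ends e
        · show Sum.elim _ _ (if h : v ∈ G.ends e then _ else _) = _
          rw [dif_pos h]
          exact quot_mk_eq_of_mem G heT (G.u0_mem e) h
        · show Sum.elim _ _ (if h : v ∈ G.ends e then _ else _) = _
          rw [dif_neg h]; rfl
      right_inv := by
        rintro (c | ⟨⟩)
        · induction c using Quot.ind with
          | _ a =>
          show (if h : a.val ∈ G.ends e then (Sum.inr () : Quot r' ⊕ Unit)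
            else Sum.inl (Quot.mk r' ⟨a.val, h⟩)) = _
          rw [dif_neg a.prop]
          rfl
        · show (if h : (G.u0 e) ∈ G.ends e then (Sum.inr () : Quot r' ⊕ Unit)
            else Sum.inl (Quot.mk r' ⟨G.u0 e, h⟩)) = _
          rw [dif_pos (G.u0_mem e)] }
  have : Nat.card (Quot r) = Nat.card (Quot r') + 1 := by
    rw [Nat.card_congr equiv, Nat.card_sum]
    simp
  exact this

end KLemmas

end Multigraph

namespace Multigraph

section KcovLemmas

variable (G : Multigraph) (e : G.E)

lemma kcov_delete (S : Finset (G.deleteEdge e).E) :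
    (G.deleteEdge e).kcov S = G.kcov (S.map (G.embDel e)) := by
  have hmem : ∀ w : G.V, (∃ f ∈ S, w ∈ (G.deleteEdge e).ends f)
      ↔ (∃ f ∈ S.map (G.embDel e), w ∈ G.ends f) := by
    intro w
    constructor
    · rintro ⟨f, hf, hw⟩
      exact ⟨f.val, Finset.mem_map_of_mem _ hf, hw⟩
    · rintro ⟨f, hf, hw⟩
      rcases Finset.mem_map.1 hf with ⟨g, hg, rfl⟩
      exact ⟨g, hg, hw⟩
  refine Nat.card_congr (Quot.congr (Equiv.subtypeEquivRight hmem) ?_)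
  intro u v
  constructor
  · rintro ⟨f, hf, hends⟩
    exact ⟨f.val, Finset.mem_map_of_mem _ hf, hends⟩
  · rintro ⟨f, hf, hends⟩
    rcases Finset.mem_map.1 hf with ⟨g, hg, rfl⟩
    exact ⟨g, hg, hends⟩

lemma kcov_contract_meets (S : Finset (G.contractEdge e).E)
    (hMe : ∃ f ∈ S, ∃ v, v ∈ G.ends (f : {e' : G.E // e' ≠ e}).val ∧ v ∈ G.ends e) :
    (G.contractEdge e).kcov S = G.kcov (insert e (S.map (G.embDel e))) := by
  classical
  set T := insert e (S.map (G.embDel e)) with hT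
  let α := {w : G.V // ∃ f ∈ T, w ∈ G.ends f}
  let β := {a : (G.contractEdge e).V // ∃ f ∈ S, a ∈ (G.contractEdge e).ends f}
  let rα : α → α → Prop := fun a b => ∃ f ∈ T, G.ends f = s(a.val, b.val)
  let rβ : β → β → Prop := fun a b => ∃ f ∈ S, (G.contractEdge e).ends f = s(a.val, b.val)
  have heT : e ∈ T := Finset.mem_insert_self e _
  have hmemT : ∀ g : (G.contractEdge e).E, g ∈ S → g.val ∈ T := fun g hg =>
    Finset.mem_insert_of_mem (Finset.mem_map_of_mem _ hg)
  have hcovproj : ∀ w : G.V, (∃ f ∈ T, w ∈ G.ends f) →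
      ∃ f ∈ S, G.proj e w ∈ (G.contractEdge e).ends f := by
    rintro w ⟨f, hfT, hwf⟩
    rcases Finset.mem_insert.1 hfT with heq | hf'
    · rw [heq] at hwf
      obtain ⟨g, hg, v, hv, hve⟩ := hMe
      refine ⟨g, hg, ?_⟩
      rw [contract_ends, proj_eq_inr G e hwf, ← proj_eq_inr G e hve]
      exact Sym2.mem_map.2 ⟨v, hv, rfl⟩
    · rcases Finset.mem_map.1 hf' with ⟨g, hg, rfl⟩
      refine ⟨g, hg, ?_⟩
      rw [contract_ends G e g]
      exact Sym2.mem_map.2 ⟨w, hwf, rfl⟩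
  let phat : α → β := fun w => ⟨G.proj e w.val, hcovproj w.val w.prop⟩
  have hcovq : ∀ a : β, ∃ f ∈ T,
      (Sum.elim Subtype.val (fun _ => G.u0 e) a.val) ∈ G.ends f := by
    rintro ⟨av, g, hg, hav⟩
    rw [contract_ends] at hav
    rcases Sym2.mem_map.1 hav with ⟨x, hx, hpx⟩
    cases av with
    | inl w =>
      have hxw : x = w.val := (proj_eq_inl_iff G e).1 hpx
      refine ⟨g.val, hmemT g hg, ?_⟩
      show w.val ∈ G.ends g.val
      rw [← hxw]
      exact hx
    | inr u =>
      exact ⟨e, heT, G.u0_mem e⟩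
  let qhat : β → α := fun a => ⟨Sum.elim Subtype.val (fun _ => G.u0 e) a.val, hcovq a⟩
  have L2 : ∀ (a : β) (x : G.V) (hx : ∃ f ∈ T, x ∈ G.ends f) (hax : a.val = G.proj e x),
      Quot.mk rα (qhat a) = Quot.mk rα ⟨x, hx⟩ := by
    intro a x hx hax
    by_cases h : x ∈ G.ends e
    · have hval : (qhat a).val = G.u0 e := by
        show Sum.elim _ _ a.val = _
        rw [hax, proj_eq_inr G e h]
        all_goals rfl
      exact quot_mk_eq_of_mem' G heT (by rw [hval]; exact G.u0_mem e) h
    · have hval : qhat a = (⟨x, hx⟩ : α) := Subtype.ext (by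
        show Sum.elim _ _ a.val = x
        rw [hax, proj_eq_inl G e h]
        all_goals rfl)
      rw [hval]
  have hfwd : ∀ u v, rα u v → Quot.mk rβ (phat u) = Quot.mk rβ (phat v) := by
    rintro u v ⟨f, hfT, hends⟩
    rcases Finset.mem_insert.1 hfT with heq | hf'
    · rw [heq] at hends
      have hu : u.val ∈ G.ends e := by rw [hends]; exact Sym2.mem_mk_left _ _
      have hv : v.val ∈ G.ends e := by rw [hends]; exact Sym2.mem_mk_right _ _
      have : phat u = phat v := Subtype.ext (by
        show G.proj e u.val = G.proj e v.val
        rw [proj_eq_inr G e hu, proj_eq_inr G e hv])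
      rw [this]
    · rcases Finset.mem_map.1 hf' with ⟨g, hg, rfl⟩
      refine Quot.sound ⟨g, hg, ?_⟩
      rw [show (G.embDel e) g = g.val from rfl] at hends
      show (G.ends g.val).map (G.proj e) = _
      rw [hends, Sym2.map_pair_eq]
      all_goals rfl
  have hbwd : ∀ a b, rβ a b → Quot.mk rα (qhat a) = Quot.mk rα (qhat b) := by
    rintro a b ⟨g, hg, hends⟩
    obtain ⟨x, y, hxy⟩ := sym2_exists (G.ends g.val)
    have hmap : s(G.proj e x, G.proj e y) = s(a.val, b.val) := by
      rw [← Sym2.map_pair_eq, ← hxy, ← contract_ends]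
      exact hends
    have covx : ∃ f ∈ T, x ∈ G.ends f :=
      ⟨g.val, hmemT g hg, by rw [hxy]; exact Sym2.mem_mk_left _ _⟩
    have covy : ∃ f ∈ T, y ∈ G.ends f :=
      ⟨g.val, hmemT g hg, by rw [hxy]; exact Sym2.mem_mk_right _ _⟩
    have hxyrel : Quot.mk rα ⟨x, covx⟩ = Quot.mk rα ⟨y, covy⟩ :=
      Quot.sound ⟨g.val, hmemT g hg, hxy⟩
    rcases Sym2.eq_iff.1 hmap with ⟨ha, hb⟩ | ⟨hb, ha⟩
    · rw [L2 a x covx ha.symm, L2 b y covy hb.symm]; exact hxyrel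
    · rw [L2 a y covy ha.symm, L2 b x covx hb.symm]; exact hxyrel.symm
  have equiv : Quot rβ ≃ Quot rα :=
    { toFun := Quot.lift (fun a => Quot.mk rα (qhat a)) hbwd
      invFun := Quot.lift (fun w => Quot.mk rβ (phat w)) hfwd
      left_inv := by
        refine Quot.ind ?_
        rintro ⟨av, ha⟩
        show Quot.mk rβ (phat (qhat ⟨av, ha⟩)) = _
        cases av with
        | inl w =>
          have : phat (qhat ⟨Sum.inl w, ha⟩) = ⟨Sum.inl w, ha⟩ := Subtype.ext (by
            show G.proj e w.val = Sum.inl w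
            rw [proj_eq_inl G e w.prop])
          rw [this]
        | inr u =>
          cases u
          have : phat (qhat ⟨Sum.inr (), ha⟩) = ⟨Sum.inr (), ha⟩ := Subtype.ext (by
            show G.proj e (G.u0 e) = Sum.inr ()
            rw [proj_eq_inr G e (G.u0_mem e)])
          rw [this]
      right_inv := by
        refine Quot.ind ?_
        intro w
        exact L2 (phat w) w.val w.prop rfl }
  exact Nat.card_congr equiv

lemma kcov_contract_avoid (S : Finset (G.contractEdge e).E)
    (hNo : ∀ f ∈ S, ∀ v, v ∈ G.ends (f : {e' : G.E // e' ≠ e}).val → v ∉ G.ends e) :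
    (G.contractEdge e).kcov S = G.kcov (S.map (G.embDel e)) := by
  classical
  let α := {w : G.V // ∃ f ∈ S.map (G.embDel e), w ∈ G.ends f}
  let β := {a : (G.contractEdge e).V // ∃ f ∈ S, a ∈ (G.contractEdge e).ends f}
  let rα : α → α → Prop := fun a b => ∃ f ∈ S.map (G.embDel e), G.ends f = s(a.val, b.val)
  let rβ : β → β → Prop := fun a b => ∃ f ∈ S, (G.contractEdge e).ends f = s(a.val, b.val)
  have nm : ∀ w : G.V, (∃ f ∈ S.map (G.embDel e), w ∈ G.ends f) → w ∉ G.ends e := by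
    rintro w ⟨f, hf, hwf⟩ hwe
    rcases Finset.mem_map.1 hf with ⟨g, hg, rfl⟩
    exact hNo g hg w hwf hwe
  have covι : ∀ (w : G.V) (hw : ∃ f ∈ S.map (G.embDel e), w ∈ G.ends f),
      ∃ f ∈ S, (Sum.inl ⟨w, nm w hw⟩ : (G.contractEdge e).V) ∈ (G.contractEdge e).ends f := by
    rintro w hw
    obtain ⟨f, hf, hwf⟩ := hw
    rcases Finset.mem_map.1 hf with ⟨g, hg, rfl⟩
    refine ⟨g, hg, ?_⟩
    rw [contract_ends G e g]
    refine Sym2.mem_map.2 ⟨w, hwf, ?_⟩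
    rw [proj_eq_inl G e]
  let ι : α → β := fun w => ⟨Sum.inl ⟨w.val, nm w.val w.prop⟩, covι w.val w.prop⟩
  have covκ : ∀ a : β,
      ∃ f ∈ S.map (G.embDel e), (Sum.elim Subtype.val (fun _ => G.u0 e) a.val) ∈ G.ends f := by
    rintro ⟨av, g, hg, hav⟩
    rw [contract_ends] at hav
    rcases Sym2.mem_map.1 hav with ⟨x, hx, hpx⟩
    have hxe : x ∉ G.ends e := hNo g hg x hx
    rw [proj_eq_inl G e hxe] at hpx
    cases av with
    | inl w =>
      have hxw : (⟨x, hxe⟩ : {v : G.V // v ∉ G.ends e}) = w := by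
        injection hpx
      refine ⟨g.val, Finset.mem_map_of_mem _ hg, ?_⟩
      show w.val ∈ G.ends g.val
      rw [← hxw]
      exact hx
    | inr u =>
      exact absurd hpx (by simp)
  let κ : β → α := fun a => ⟨Sum.elim Subtype.val (fun _ => G.u0 e) a.val, covκ a⟩
  have L2 : ∀ (a : β) (x : G.V) (hx : ∃ f ∈ S.map (G.embDel e), x ∈ G.ends f)
      (hax : a.val = G.proj e x), κ a = ⟨x, hx⟩ := by
    intro a x hx hax
    refine Subtype.ext ?_
    show Sum.elim _ _ a.val = x
    rw [hax, proj_eq_inl G e (nm x hx)]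
    all_goals rfl
  have hfwd : ∀ u v, rα u v → Quot.mk rβ (ι u) = Quot.mk rβ (ι v) := by
    rintro u v ⟨f, hf, hends⟩
    rcases Finset.mem_map.1 hf with ⟨g, hg, rfl⟩
    refine Quot.sound ⟨g, hg, ?_⟩
    rw [show (G.embDel e) g = g.val from rfl] at hends
    show (G.ends g.val).map (G.proj e) = _
    rw [hends, Sym2.map_pair_eq]
    show s(G.proj e u.val, G.proj e v.val) = _
    rw [proj_eq_inl G e (nm u.val u.prop), proj_eq_inl G e (nm v.val v.prop)]
  have hbwd : ∀ a b, rβ a b → Quot.mk rα (κ a) = Quot.mk rα (κ b) := by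
    rintro a b ⟨g, hg, hends⟩
    obtain ⟨x, y, hxy⟩ := sym2_exists (G.ends g.val)
    have hmap : s(G.proj e x, G.proj e y) = s(a.val, b.val) := by
      rw [← Sym2.map_pair_eq, ← hxy, ← contract_ends]
      exact hends
    have covx : ∃ f ∈ S.map (G.embDel e), x ∈ G.ends f :=
      ⟨g.val, Finset.mem_map_of_mem _ hg, by rw [hxy]; exact Sym2.mem_mk_left _ _⟩
    have covy : ∃ f ∈ S.map (G.embDel e), y ∈ G.ends f :=
      ⟨g.val, Finset.mem_map_of_mem _ hg, by rw [hxy]; exact Sym2.mem_mk_right _ _⟩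
    have hxyrel : Quot.mk rα ⟨x, covx⟩ = Quot.mk rα ⟨y, covy⟩ :=
      Quot.sound ⟨g.val, Finset.mem_map_of_mem _ hg, hxy⟩
    rcases Sym2.eq_iff.1 hmap with ⟨ha, hb⟩ | ⟨hb, ha⟩
    · rw [L2 a x covx ha.symm, L2 b y covy hb.symm]; exact hxyrel
    · rw [L2 a y covy ha.symm, L2 b x covx hb.symm]; exact hxyrel.symm
  have equiv : Quot rβ ≃ Quot rα :=
    { toFun := Quot.lift (fun a => Quot.mk rα (κ a)) hbwd
      invFun := Quot.lift (fun w => Quot.mk rβ (ι w)) hfwd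
      left_inv := by
        refine Quot.ind ?_
        rintro ⟨av, ha⟩
        show Quot.mk rβ (ι (κ ⟨av, ha⟩)) = _
        cases av with
        | inl w =>
          have : ι (κ ⟨Sum.inl w, ha⟩) = ⟨Sum.inl w, ha⟩ := Subtype.ext (by
            exact congrArg Sum.inl (Subtype.ext rfl))
          rw [this]
        | inr u =>
          exfalso
          obtain ⟨g, hg, hav⟩ := ha
          rw [contract_ends] at hav
          rcases Sym2.mem_map.1 hav with ⟨x, hx, hpx⟩
          have hxe : x ∉ G.ends e := hNo g hg x hx
          rw [proj_eq_inl G e hxe] at hpx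
          exact absurd hpx (by simp)
      right_inv := by
        refine Quot.ind ?_
        intro w
        show Quot.mk rα (κ (ι w)) = _
        have : κ (ι w) = w := Subtype.ext rfl
        rw [this] }
  exact Nat.card_congr equiv

lemma kcov_extract (S : Finset (G.extractEdge e).E) :
    G.kcov (insert e (S.map (G.embExt e))) = (G.extractEdge e).kcov S + 1 := by
  classical
  set T := insert e (S.map (G.embExt e)) with hT
  let α := {w : G.V // ∃ f ∈ T, w ∈ G.ends f}
  let β := {a : (G.extractEdge e).V // ∃ f ∈ S, a ∈ (G.extractEdge e).ends f}
  let rα : α → α → Prop := fun a b => ∃ f ∈ T, G.ends f = s(a.val, b.val)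
  let rβ : β → β → Prop := fun a b => ∃ f ∈ S, (G.extractEdge e).ends f = s(a.val, b.val)
  have heT : e ∈ T := Finset.mem_insert_self e _
  have hmemT : ∀ g : (G.extractEdge e).E, g ∈ S → g.val ∈ T := fun g hg =>
    Finset.mem_insert_of_mem (Finset.mem_map_of_mem _ hg)
  have covF : ∀ (w : α) (h : w.val ∉ G.ends e),
      ∃ f ∈ S, (⟨w.val, h⟩ : (G.extractEdge e).V) ∈ (G.extractEdge e).ends f := by
    rintro ⟨wv, f, hfT, hwf⟩ h
    rcases Finset.mem_insert.1 hfT with rfl | hf'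
    · exact absurd hwf h
    · rcases Finset.mem_map.1 hf' with ⟨g, hg, rfl⟩
      exact ⟨g, hg, (sym2_mem_attachWith _ _).2 hwf⟩
  have covb : ∀ b : β, ∃ f ∈ T, b.val.val ∈ G.ends f := by
    rintro ⟨bv, g, hg, hbv⟩
    exact ⟨g.val, hmemT g hg, (sym2_mem_attachWith _ _).1 hbv⟩
  have resp' : ∀ a b, rβ a b →
      Quot.mk rα ⟨a.val.val, covb a⟩ = Quot.mk rα ⟨b.val.val, covb b⟩ := by
    rintro a b ⟨g, hg, hends⟩
    have hends' : (G.ends g.val).attachWith (fun v hv => g.prop v hv)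
        = s(a.val, b.val) := hends
    exact Quot.sound ⟨g.val, hmemT g hg,
      sym2_attachWith_eq_pair_iff (x := a.val) (y := b.val) _ hends'⟩
  have resp : ∀ u v, rα u v →
      (if h : u.val ∈ G.ends e then (Sum.inr () : Quot rβ ⊕ Unit)
        else Sum.inl (Quot.mk rβ ⟨⟨u.val, h⟩, covF u h⟩))
      = (if h : v.val ∈ G.ends e then (Sum.inr () : Quot rβ ⊕ Unit)
        else Sum.inl (Quot.mk rβ ⟨⟨v.val, h⟩, covF v h⟩)) := by
    rintro u v ⟨f, hfT, hends⟩
    rcases Finset.mem_insert.1 hfT with rfl | hf'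
    · have hu : u.val ∈ G.ends f := by rw [hends]; exact Sym2.mem_mk_left _ _
      have hv : v.val ∈ G.ends f := by rw [hends]; exact Sym2.mem_mk_right _ _
      rw [dif_pos hu, dif_pos hv]
    · rcases Finset.mem_map.1 hf' with ⟨g, hg, rfl⟩
      rw [show (G.embExt e) g = g.val from rfl] at hends
      have hu : u.val ∉ G.ends e :=
        g.prop u.val (by rw [hends]; exact Sym2.mem_mk_left _ _)
      have hv : v.val ∉ G.ends e :=
        g.prop v.val (by rw [hends]; exact Sym2.mem_mk_right _ _)
      rw [dif_neg hu, dif_neg hv]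
      congr 1
      refine Quot.sound ⟨g, hg, ?_⟩
      show (G.ends g.val).attachWith _ = _
      exact sym2_attachWith_eq _ hends hu hv
  have equiv : Quot rα ≃ Quot rβ ⊕ Unit :=
    { toFun := Quot.lift (fun w => if h : w.val ∈ G.ends e then (Sum.inr () : Quot rβ ⊕ Unit)
        else Sum.inl (Quot.mk rβ ⟨⟨w.val, h⟩, covF w h⟩)) resp
      invFun := Sum.elim (Quot.lift (fun b => Quot.mk rα ⟨b.val.val, covb b⟩) resp')
        (fun _ => Quot.mk rα ⟨G.u0 e, ⟨e, heT, G.u0_mem e⟩⟩)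
      left_inv := by
        refine Quot.ind ?_
        intro w
        by_cases h : w.val ∈ G.ends e
        · show Sum.elim _ _ (if h : w.val ∈ G.ends e then _ else _) = _
          rw [dif_pos h]
          exact quot_mk_eq_of_mem' G heT (G.u0_mem e) h
        · show Sum.elim _ _ (if h : w.val ∈ G.ends e then _ else _) = _
          rw [dif_neg h]
          exact congrArg (Quot.mk rα) (Subtype.ext rfl)
      right_inv := by
        rintro (c | ⟨⟩)
        · induction c using Quot.ind with
          | _ b =>
          show (if h : b.val.val ∈ G.ends e then (Sum.inr () : Quot rβ ⊕ Unit)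
            else Sum.inl (Quot.mk rβ ⟨⟨b.val.val, h⟩, _⟩)) = _
          rw [dif_neg b.val.prop]
          exact congrArg Sum.inl (congrArg (Quot.mk rβ) (Subtype.ext (Subtype.ext rfl)))
        · show (if h : (G.u0 e) ∈ G.ends e then (Sum.inr () : Quot rβ ⊕ Unit)
            else _) = _
          rw [dif_pos (G.u0_mem e)] }
  have : Nat.card (Quot rα) = Nat.card (Quot rβ) + 1 := by
    rw [Nat.card_congr equiv, Nat.card_sum]
    simp
  exact this

end KcovLemmas

end Multigraph

namespace Multigraph

section DisjLemmas

variable (G : Multigraph) (e : G.E)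

lemma covDisjoint_delete (A B : Finset (G.deleteEdge e).E) :
    (G.deleteEdge e).CovDisjoint A B
      ↔ G.CovDisjoint (A.map (G.embDel e)) (B.map (G.embDel e)) := by
  have hc : ∀ (S : Finset (G.deleteEdge e).E) (v : G.V),
      (∃ f ∈ S.map (G.embDel e), v ∈ G.ends f) ↔ ∃ f ∈ S, v ∈ (G.deleteEdge e).ends f := by
    intro S v
    constructor
    · rintro ⟨f, hf, hv⟩
      rcases Finset.mem_map.1 hf with ⟨g, hg, rfl⟩
      exact ⟨g, hg, hv⟩
    · rintro ⟨f, hf, hv⟩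
      exact ⟨f.val, Finset.mem_map_of_mem _ hf, hv⟩
  constructor
  · intro h v hA hB
    exact h v ((hc A v).1 hA) ((hc B v).1 hB)
  · intro h v hA hB
    exact h v ((hc A v).2 hA) ((hc B v).2 hB)

/-- Membership in the ends of a contracted edge. -/
lemma mem_contract_ends {a : (G.contractEdge e).V} {f : (G.contractEdge e).E} :
    a ∈ (G.contractEdge e).ends f ↔ ∃ x, x ∈ G.ends f.val ∧ G.proj e x = a := by
  rw [contract_ends]
  exact Sym2.mem_map

lemma covDisjoint_contract_avoid (A B : Finset (G.contractEdge e).E)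
    (hNo : ∀ f ∈ B, ∀ v, v ∈ G.ends (f : {e' : G.E // e' ≠ e}).val → v ∉ G.ends e) :
    (G.contractEdge e).CovDisjoint A B
      ↔ G.CovDisjoint (insert e (A.map (G.embDel e))) (B.map (G.embDel e)) := by
  constructor
  · rintro h v ⟨f, hfA, hvf⟩ ⟨g, hgB, hvg⟩
    rcases Finset.mem_map.1 hgB with ⟨b, hb, rfl⟩
    have hve : v ∉ G.ends e := hNo b hb v hvg
    refine h (G.proj e v) ?_ ?_
    · rcases Finset.mem_insert.1 hfA with heq | hf'
      · rw [heq] at hvf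
        exact absurd hvf hve
      · rcases Finset.mem_map.1 hf' with ⟨a, ha, rfl⟩
        exact ⟨a, ha, (mem_contract_ends G e).2 ⟨v, hvf, rfl⟩⟩
    · exact ⟨b, hb, (mem_contract_ends G e).2 ⟨v, hvg, rfl⟩⟩
  · rintro h a ⟨f, hfA, haf⟩ ⟨g, hgB, hag⟩
    rcases (mem_contract_ends G e).1 haf with ⟨x, hx, hpx⟩
    rcases (mem_contract_ends G e).1 hag with ⟨y, hy, hpy⟩
    have hye : y ∉ G.ends e := hNo g hgB y hy
    rw [← hpx, proj_eq_inl G e hye] at hpy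
    have hxy : x = y := (proj_eq_inl_iff G e).1 hpy.symm
    refine h y ?_ ?_
    · refine ⟨f.val, Finset.mem_insert_of_mem (Finset.mem_map_of_mem _ hfA), ?_⟩
      rw [← hxy]; exact hx
    · exact ⟨g.val, Finset.mem_map_of_mem _ hgB, hy⟩

lemma covDisjoint_contract_meets (A B : Finset (G.contractEdge e).E)
    (hMe : ∃ f ∈ B, ∃ v, v ∈ G.ends (f : {e' : G.E // e' ≠ e}).val ∧ v ∈ G.ends e) :
    (G.contractEdge e).CovDisjoint A B
      ↔ G.CovDisjoint (A.map (G.embDel e)) (insert e (B.map (G.embDel e))) := by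
  constructor
  · rintro h v ⟨f, hfA, hvf⟩ ⟨g, hgB, hvg⟩
    rcases Finset.mem_map.1 hfA with ⟨a, ha, rfl⟩
    refine h (G.proj e v) ⟨a, ha, (mem_contract_ends G e).2 ⟨v, hvf, rfl⟩⟩ ?_
    rcases Finset.mem_insert.1 hgB with heq | hg'
    · rw [heq] at hvg
      obtain ⟨b, hb, w, hwb, hwe⟩ := hMe
      refine ⟨b, hb, (mem_contract_ends G e).2 ⟨w, hwb, ?_⟩⟩
      rw [proj_eq_inr G e hwe, proj_eq_inr G e hvg]
    · rcases Finset.mem_map.1 hg' with ⟨b, hb, rfl⟩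
      exact ⟨b, hb, (mem_contract_ends G e).2 ⟨v, hvg, rfl⟩⟩
  · rintro h a ⟨f, hfA, haf⟩ ⟨g, hgB, hag⟩
    rcases (mem_contract_ends G e).1 haf with ⟨x, hx, hpx⟩
    rcases (mem_contract_ends G e).1 hag with ⟨y, hy, hpy⟩
    by_cases hxe : x ∈ G.ends e
    · exact h x ⟨f.val, Finset.mem_map_of_mem _ hfA, hx⟩ ⟨e, Finset.mem_insert_self e _, hxe⟩
    · rw [← hpy, proj_eq_inl G e hxe] at hpx
      have hxy : y = x := (proj_eq_inl_iff G e).1 hpx.symm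
      refine h x ⟨f.val, Finset.mem_map_of_mem _ hfA, hx⟩ ?_
      refine ⟨g.val, Finset.mem_insert_of_mem (Finset.mem_map_of_mem _ hgB), ?_⟩
      rw [← hxy]; exact hy

lemma covDisjoint_extract (A B : Finset (G.extractEdge e).E) :
    (G.extractEdge e).CovDisjoint A B
      ↔ G.CovDisjoint (A.map (G.embExt e)) (insert e (B.map (G.embExt e))) := by
  constructor
  · rintro h v ⟨f, hfA, hvf⟩ ⟨g, hgB, hvg⟩
    rcases Finset.mem_map.1 hfA with ⟨a, ha, rfl⟩
    have hve : v ∉ G.ends e := a.prop v hvf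
    rcases Finset.mem_insert.1 hgB with heq | hg'
    · rw [heq] at hvg
      exact hve hvg
    · rcases Finset.mem_map.1 hg' with ⟨b, hb, rfl⟩
      exact h ⟨v, hve⟩ ⟨a, ha, (sym2_mem_attachWith _ _).2 hvf⟩
        ⟨b, hb, (sym2_mem_attachWith _ _).2 hvg⟩
  · rintro h a ⟨f, hfA, haf⟩ ⟨g, hgB, hag⟩
    refine h a.val ⟨f.val, Finset.mem_map_of_mem _ hfA, (sym2_mem_attachWith _ _).1 haf⟩
      ⟨g.val, Finset.mem_insert_of_mem (Finset.mem_map_of_mem _ hgB),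
        (sym2_mem_attachWith _ _).1 hag⟩

lemma not_covDisjoint_insert_insert (A B : Finset G.E) :
    ¬ G.CovDisjoint (insert e A) (insert e B) := by
  intro h
  exact h (G.u0 e) ⟨e, Finset.mem_insert_self e _, G.u0_mem e⟩
    ⟨e, Finset.mem_insert_self e _, G.u0_mem e⟩

lemma not_covDisjoint_insert_left (A : Finset G.E) (B : Finset (G.contractEdge e).E)
    (hMe : ∃ f ∈ B, ∃ v, v ∈ G.ends (f : {e' : G.E // e' ≠ e}).val ∧ v ∈ G.ends e) :
    ¬ G.CovDisjoint (insert e A) (B.map (G.embDel e)) := by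
  intro h
  obtain ⟨b, hb, v, hvb, hve⟩ := hMe
  exact h v ⟨e, Finset.mem_insert_self e _, hve⟩ ⟨b.val, Finset.mem_map_of_mem _ hb, hvb⟩

lemma not_covDisjoint_insert_right (A : Finset (G.contractEdge e).E) (B : Finset G.E)
    (hMe : ∃ f ∈ A, ∃ v, v ∈ G.ends (f : {e' : G.E // e' ≠ e}).val ∧ v ∈ G.ends e) :
    ¬ G.CovDisjoint (A.map (G.embDel e)) (insert e B) := by
  intro h
  obtain ⟨a, ha, v, hva, hve⟩ := hMe
  exact h v ⟨a.val, Finset.mem_map_of_mem _ ha, hva⟩ ⟨e, Finset.mem_insert_self e _, hve⟩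

end DisjLemmas

end Multigraph

namespace Multigraph

section SumMachinery

variable (G : Multigraph) (e : G.E)

/-- Splitting a finset of edges according to membership of `e`. -/
noncomputable def eSplit : Finset (G.deleteEdge e).E × Bool ≃ Finset G.E where
  toFun p := cond p.2 (insert e (p.1.map (G.embDel e))) (p.1.map (G.embDel e))
  invFun A := (A.subtype (· ≠ e), decide (e ∈ A))
  left_inv := by
    classical
    rintro ⟨A, b⟩
    have h1 : (A.map (G.embDel e)).subtype (· ≠ e) = A := by
      ext x
      simp only [Finset.mem_subtype, Finset.mem_map]
      constructor
      · rintro ⟨a, ha, hax⟩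
        rwa [Subtype.ext hax] at ha
      · intro hx
        exact ⟨x, hx, rfl⟩
    cases b with
    | false =>
      simp only [cond_false]
      refine Prod.ext h1 ?_
      simp [e_notMem_mapDel G e A]
    | true =>
      simp only [cond_true]
      refine Prod.ext ?_ ?_
      · have h3 : (insert e (A.map (G.embDel e))).subtype (· ≠ e)
            = (A.map (G.embDel e)).subtype (· ≠ e) := by
          ext x
          simp only [Finset.mem_subtype, Finset.mem_insert]
          have hx := x.prop
          tauto
        rw [h3, h1]
      · simp
  right_inv := by
    classical
    intro A
    have h2 : (A.subtype (· ≠ e)).map (G.embDel e) = A.erase e := by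
      rw [show (A.subtype (· ≠ e)).map (G.embDel e)
          = (A.subtype (· ≠ e)).map (Function.Embedding.subtype (· ≠ e)) from rfl,
        Finset.subtype_map, Finset.filter_ne']
    by_cases h : e ∈ A
    · simp [h, h2, Finset.insert_erase h]
    · simp [h, h2, Finset.erase_eq_of_notMem h]

lemma sum_split {M : Type*} [AddCommMonoid M] (f : Finset G.E → M) :
    ∑ A : Finset G.E, f A
      = ∑ A' : Finset (G.deleteEdge e).E,
          (f (A'.map (G.embDel e)) + f (insert e (A'.map (G.embDel e)))) := by
  rw [← Equiv.sum_comp (G.eSplit e) f, Fintype.sum_prod_type]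
  refine Finset.sum_congr rfl fun A' _ => ?_
  rw [Fintype.sum_bool]
  show f (insert e _) + f (A'.map (G.embDel e)) = _
  rw [add_comm]

/-- Embedding of the extraction edges into the deletion edges. -/
def jExt : (G.extractEdge e).E ↪ (G.deleteEdge e).E :=
  ⟨fun f => ⟨f.val, G.extract_ne e f⟩, by
    intro a b hab
    refine Subtype.ext ?_
    injection hab⟩

lemma jExt_trans : (G.jExt e).trans (G.embDel e) = G.embExt e := rfl

lemma not_meets_jExt (T : Finset (G.extractEdge e).E) :
    ¬ ∃ f ∈ T.map (G.jExt e), ∃ v, v ∈ G.ends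
      (f : {e' : G.E // e' ≠ e}).val ∧ v ∈ G.ends e := by
  rintro ⟨f, hf, v, hvf, hve⟩
  rcases Finset.mem_map.1 hf with ⟨t, ht, rfl⟩
  exact t.prop v hvf hve

lemma sum_avoid {M : Type*} [AddCommMonoid M] (g : Finset (G.deleteEdge e).E → M)
    (h0 : ∀ S, (∃ f ∈ S, ∃ v, v ∈ G.ends
      (f : {e' : G.E // e' ≠ e}).val ∧ v ∈ G.ends e) → g S = 0) :
    ∑ S : Finset (G.deleteEdge e).E, g S
      = ∑ T : Finset (G.extractEdge e).E, g (T.map (G.jExt e)) := by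
  classical
  set p : Finset (G.deleteEdge e).E → Prop := fun S =>
    ∃ f ∈ S, ∃ v, v ∈ G.ends (f : {e' : G.E // e' ≠ e}).val ∧ v ∈ G.ends e with hp
  have hME : ∀ X : Finset (G.extractEdge e).E,
      (Finset.mapEmbedding (G.jExt e)).toEmbedding X = X.map (G.jExt e) := fun X => rfl
  have himg : (Finset.univ.map (Finset.mapEmbedding (G.jExt e)).toEmbedding) =
      Finset.univ.filter (fun S => ¬ p S) := by
    ext S
    simp only [Finset.mem_map, Finset.mem_filter, Finset.mem_univ, true_and]
    constructor
    · rintro ⟨T, rfl⟩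
      rw [hME]
      exact not_meets_jExt G e T
    · intro hS
      refine ⟨(S.map (G.embDel e)).subtype
        (fun x => ∀ v : G.V, v ∈ G.ends x → v ∉ G.ends e), ?_⟩
      show Finset.map (G.jExt e) ((S.map (G.embDel e)).subtype
        (fun x => ∀ v : G.V, v ∈ G.ends x → v ∉ G.ends e)) = S
      ext x
      constructor
      · intro hx
        rcases Finset.mem_map.1 hx with ⟨t, ht, rfl⟩
        have ht' : t.val ∈ S.map (G.embDel e) := Finset.mem_subtype.1 ht
        rcases Finset.mem_map.1 ht' with ⟨s, hs, hsx⟩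
        have hst : s = (G.jExt e) t := Subtype.ext hsx
        rwa [← hst]
      · intro hx
        have hP : ∀ v : G.V, v ∈ G.ends x.val → v ∉ G.ends e := by
          intro v hv hve
          exact hS ⟨x, hx, v, hv, hve⟩
        refine Finset.mem_map.2 ⟨⟨x.val, hP⟩, ?_, ?_⟩
        · refine Finset.mem_subtype.2 ?_
          exact Finset.mem_map_of_mem _ hx
        · exact Subtype.ext rfl
  have hsplit := Finset.sum_filter_add_sum_filter_not Finset.univ p g
  have h1 : ∑ S ∈ Finset.univ.filter p, g S = 0 :=
    Finset.sum_eq_zero fun S hS => h0 S (Finset.mem_filter.1 hS).2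
  have h2 : ∑ S : Finset (G.deleteEdge e).E, g S
      = ∑ S ∈ Finset.univ.filter (fun S => ¬ p S), g S := by
    rw [← hsplit, h1, zero_add]
  rw [h2, ← himg, Finset.sum_map]
  refine Finset.sum_congr rfl fun T _ => ?_
  rw [hME]

end SumMachinery

end Multigraph

namespace Multigraph

section TermLemmas

variable {R : Type*} [CommRing R]

/-- A single summand of the edge elimination polynomial. -/
noncomputable def term (G : Multigraph) (x y z : R) (A B : Finset G.E) : R :=
  if G.CovDisjoint A B then
    x ^ (G.k (A ∪ B) - G.kcov B) * y ^ (A.card + B.card - G.kcov B) * z ^ G.kcov B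
  else 0

lemma xi_eq_sum_term (G : Multigraph) (x y z : R) :
    G.xi x y z = ∑ A : Finset G.E, ∑ B : Finset G.E, term G x y z A B := rfl

variable (G : Multigraph) (e : G.E) (x y z : R)

lemma card_insert_mapDel (S : Finset (G.deleteEdge e).E) :
    (insert e (S.map (G.embDel e))).card = S.card + 1 := by
  rw [Finset.card_insert_of_notMem (e_notMem_mapDel G e S), Finset.card_map]

lemma card_insert_mapExt (S : Finset (G.extractEdge e).E) :
    (insert e (S.map (G.embExt e))).card = S.card + 1 := by
  rw [Finset.card_insert_of_notMem (e_notMem_mapExt G e S), Finset.card_map]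

lemma term_delete (A B : Finset (G.deleteEdge e).E) :
    term G x y z (A.map (G.embDel e)) (B.map (G.embDel e))
      = term (G.deleteEdge e) x y z A B := by
  classical
  unfold term
  by_cases h : (G.deleteEdge e).CovDisjoint A B
  · rw [if_pos ((covDisjoint_delete G e A B).1 h), if_pos h, ← Finset.map_union,
      ← k_delete, ← kcov_delete, Finset.card_map, Finset.card_map]
  · rw [if_neg (fun hc => h ((covDisjoint_delete G e A B).2 hc)), if_neg h]

lemma term_contract_avoid (A B : Finset (G.contractEdge e).E)
    (hNo : ∀ f ∈ B, ∀ v, v ∈ G.ends (f : {e' : G.E // e' ≠ e}).val → v ∉ G.ends e) :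
    term G x y z (insert e (A.map (G.embDel e))) (B.map (G.embDel e))
      = y * term (G.contractEdge e) x y z A B := by
  classical
  unfold term
  by_cases h : (G.contractEdge e).CovDisjoint A B
  · rw [if_pos ((covDisjoint_contract_avoid G e A B hNo).1 h), if_pos h]
    have hk : G.k (insert e (A.map (G.embDel e)) ∪ B.map (G.embDel e))
        = (G.contractEdge e).k (A ∪ B) := by
      rw [Finset.insert_union, k_contract G e (A ∪ B)]
      exact congrArg (fun S => G.k (insert e S)) (Finset.map_union A B).symm
    have hkc : G.kcov (B.map (G.embDel e)) = (G.contractEdge e).kcov B :=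
      (kcov_contract_avoid G e B hNo).symm
    have hcard : (insert e (A.map (G.embDel e))).card = A.card + 1 :=
      card_insert_mapDel G e A
    have hle : (G.contractEdge e).kcov B ≤ A.card + B.card :=
      le_trans (kcov_le_card _ B) (Nat.le_add_left _ _)
    rw [hk, hkc, hcard, (show (B.map (G.embDel e)).card = B.card from Finset.card_map _)]
    have hexp : A.card + 1 + B.card - (G.contractEdge e).kcov B
        = (A.card + B.card - (G.contractEdge e).kcov B) + 1 := by omega
    rw [hexp, pow_succ]
    ring
  · rw [if_neg (fun hc => h ((covDisjoint_contract_avoid G e A B hNo).2 hc)), if_neg h]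
    ring

lemma term_contract_meets (A B : Finset (G.contractEdge e).E)
    (hMe : ∃ f ∈ B, ∃ v, v ∈ G.ends (f : {e' : G.E // e' ≠ e}).val ∧ v ∈ G.ends e) :
    term G x y z (A.map (G.embDel e)) (insert e (B.map (G.embDel e)))
      = y * term (G.contractEdge e) x y z A B := by
  classical
  unfold term
  by_cases h : (G.contractEdge e).CovDisjoint A B
  · rw [if_pos ((covDisjoint_contract_meets G e A B hMe).1 h), if_pos h]
    have hk : G.k (A.map (G.embDel e) ∪ insert e (B.map (G.embDel e)))
        = (G.contractEdge e).k (A ∪ B) := by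
      rw [Finset.union_insert, k_contract G e (A ∪ B)]
      exact congrArg (fun S => G.k (insert e S)) (Finset.map_union A B).symm
    have hkc : G.kcov (insert e (B.map (G.embDel e))) = (G.contractEdge e).kcov B :=
      (kcov_contract_meets G e B hMe).symm
    have hcard : (insert e (B.map (G.embDel e))).card = B.card + 1 :=
      card_insert_mapDel G e B
    have hle : (G.contractEdge e).kcov B ≤ A.card + B.card :=
      le_trans (kcov_le_card _ B) (Nat.le_add_left _ _)
    rw [hk, hkc, hcard, (show (A.map (G.embDel e)).card = A.card from Finset.card_map _)]
    have hexp : A.card + (B.card + 1) - (G.contractEdge e).kcov B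
        = (A.card + B.card - (G.contractEdge e).kcov B) + 1 := by omega
    rw [hexp, pow_succ]
    ring
  · rw [if_neg (fun hc => h ((covDisjoint_contract_meets G e A B hMe).2 hc)), if_neg h]
    ring

lemma term_extract (A B : Finset (G.extractEdge e).E) :
    term G x y z (A.map (G.embExt e)) (insert e (B.map (G.embExt e)))
      = z * term (G.extractEdge e) x y z A B := by
  classical
  unfold term
  by_cases h : (G.extractEdge e).CovDisjoint A B
  · rw [if_pos ((covDisjoint_extract G e A B).1 h), if_pos h]
    have hk : G.k (A.map (G.embExt e) ∪ insert e (B.map (G.embExt e)))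
        = (G.extractEdge e).k (A ∪ B) + 1 := by
      rw [Finset.union_insert, ← Finset.map_union, k_extract]
    have hkc : G.kcov (insert e (B.map (G.embExt e))) = (G.extractEdge e).kcov B + 1 :=
      kcov_extract G e B
    have hcard : (insert e (B.map (G.embExt e))).card = B.card + 1 :=
      card_insert_mapExt G e B
    rw [hk, hkc, hcard, Finset.card_map]
    have hx : (G.extractEdge e).k (A ∪ B) + 1 - ((G.extractEdge e).kcov B + 1)
        = (G.extractEdge e).k (A ∪ B) - (G.extractEdge e).kcov B := by omega
    have hy : A.card + (B.card + 1) - ((G.extractEdge e).kcov B + 1)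
        = A.card + B.card - (G.extractEdge e).kcov B := by omega
    rw [hx, hy, pow_succ]
    ring
  · rw [if_neg (fun hc => h ((covDisjoint_extract G e A B).2 hc)), if_neg h]
    ring

lemma term_zero_insert_insert (A B : Finset G.E) :
    term G x y z (insert e A) (insert e B) = 0 := by
  unfold term
  rw [if_neg (not_covDisjoint_insert_insert G e A B)]

lemma term_zero_insert_left (A : Finset G.E) (B : Finset (G.contractEdge e).E)
    (hMe : ∃ f ∈ B, ∃ v, v ∈ G.ends (f : {e' : G.E // e' ≠ e}).val ∧ v ∈ G.ends e) :
    term G x y z (insert e A) (B.map (G.embDel e)) = 0 := by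
  unfold term
  rw [if_neg (not_covDisjoint_insert_left G e A B hMe)]

lemma term_zero_insert_right (A : Finset (G.contractEdge e).E) (B : Finset G.E)
    (hMe : ∃ f ∈ A, ∃ v, v ∈ G.ends (f : {e' : G.E // e' ≠ e}).val ∧ v ∈ G.ends e) :
    term G x y z (A.map (G.embDel e)) (insert e B) = 0 := by
  unfold term
  rw [if_neg (not_covDisjoint_insert_right G e A B hMe)]

end TermLemmas

end Multigraph

namespace Multigraph

/-- `S` contains an edge meeting an endpoint of `e`. -/
def Meets (G : Multigraph) (e : G.E) (S : Finset (G.deleteEdge e).E) : Prop :=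
  ∃ f ∈ S, ∃ v, v ∈ G.ends (f : {e' : G.E // e' ≠ e}).val ∧ v ∈ G.ends e

end Multigraph

open MvPolynomial Multigraph in
theorem xi_edge_elimination' (G : Multigraph) (e : G.E) :
    G.xi (X 0 : MvPolynomial (Fin 3) ℤ) (X 1) (X 2) =
      (G.deleteEdge e).xi (X 0) (X 1) (X 2)
        + X 1 * (G.contractEdge e).xi (X 0) (X 1) (X 2)
        + X 2 * (G.extractEdge e).xi (X 0) (X 1) (X 2) := by
  classical
  set x : MvPolynomial (Fin 3) ℤ := X 0 with hx
  set y : MvPolynomial (Fin 3) ℤ := X 1 with hy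
  set z : MvPolynomial (Fin 3) ℤ := X 2 with hz
  rw [xi_eq_sum_term G x y z, xi_eq_sum_term (G.deleteEdge e) x y z,
    xi_eq_sum_term (G.contractEdge e) x y z, xi_eq_sum_term (G.extractEdge e) x y z]
  -- Step 1: split both sums according to membership of `e`.
  have e1 : ∑ A : Finset G.E, ∑ B : Finset G.E, term G x y z A B
      = ∑ A' : Finset (G.deleteEdge e).E, ∑ B' : Finset (G.deleteEdge e).E,
        ((term G x y z (A'.map (G.embDel e)) (B'.map (G.embDel e))
          + term G x y z (A'.map (G.embDel e)) (insert e (B'.map (G.embDel e))))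
         + (term G x y z (insert e (A'.map (G.embDel e))) (B'.map (G.embDel e))
          + term G x y z (insert e (A'.map (G.embDel e))) (insert e (B'.map (G.embDel e))))) := by
    rw [sum_split G e (fun A => ∑ B : Finset G.E, term G x y z A B)]
    refine Finset.sum_congr rfl fun A' _ => ?_
    rw [sum_split G e (fun B => term G x y z (A'.map (G.embDel e)) B),
      sum_split G e (fun B => term G x y z (insert e (A'.map (G.embDel e))) B),
      ← Finset.sum_add_distrib]
  rw [e1]
  -- Step 2: rewrite each summand.
  have e2 : ∀ A' B' : Finset (G.deleteEdge e).E,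
      term G x y z (A'.map (G.embDel e)) (insert e (B'.map (G.embDel e)))
        + term G x y z (insert e (A'.map (G.embDel e))) (B'.map (G.embDel e))
      = y * term (G.contractEdge e) x y z A' B'
        + (if (¬ G.Meets e A' ∧ ¬ G.Meets e B') then
            term G x y z (A'.map (G.embDel e)) (insert e (B'.map (G.embDel e))) else 0) := by
    intro A' B'
    by_cases hB : G.Meets e B'
    · rw [term_contract_meets G e x y z A' B' hB, term_zero_insert_left G e x y z _ B' hB,
        if_neg (fun hc => hc.2 hB)]
      all_goals ring
    · have hNoB : ∀ f ∈ B', ∀ v, v ∈ G.ends (f : {e' : G.E // e' ≠ e}).val → v ∉ G.ends e :=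
        fun f hf v hv hve => hB ⟨f, hf, v, hv, hve⟩
      rw [term_contract_avoid G e x y z A' B' hNoB]
      by_cases hA : G.Meets e A'
      · rw [term_zero_insert_right G e x y z A' _ hA, if_neg (fun hc => hc.1 hA)]
        all_goals ring
      · rw [if_pos ⟨hA, hB⟩]
        all_goals ring
  have estep : ∑ A' : Finset (G.deleteEdge e).E, ∑ B' : Finset (G.deleteEdge e).E,
        ((term G x y z (A'.map (G.embDel e)) (B'.map (G.embDel e))
          + term G x y z (A'.map (G.embDel e)) (insert e (B'.map (G.embDel e))))
         + (term G x y z (insert e (A'.map (G.embDel e))) (B'.map (G.embDel e))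
          + term G x y z (insert e (A'.map (G.embDel e))) (insert e (B'.map (G.embDel e)))))
      = ∑ A' : Finset (G.deleteEdge e).E, ∑ B' : Finset (G.deleteEdge e).E,
        (term (G.deleteEdge e) x y z A' B'
         + (y * term (G.contractEdge e) x y z A' B'
            + (if (¬ G.Meets e A' ∧ ¬ G.Meets e B') then
                term G x y z (A'.map (G.embDel e)) (insert e (B'.map (G.embDel e))) else 0))) := by
    refine Finset.sum_congr rfl fun A' _ => Finset.sum_congr rfl fun B' _ => ?_
    rw [term_delete G e x y z A' B',
      term_zero_insert_insert G e x y z (A'.map (G.embDel e)) (B'.map (G.embDel e))]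
    linear_combination (e2 A' B')
  rw [estep]
  simp only [Finset.sum_add_distrib]
  -- Step 3: the leftover sum is the extraction part.
  have e3 : ∑ A' : Finset (G.deleteEdge e).E, ∑ B' : Finset (G.deleteEdge e).E,
        (if (¬ G.Meets e A' ∧ ¬ G.Meets e B') then
          term G x y z (A'.map (G.embDel e)) (insert e (B'.map (G.embDel e))) else 0)
      = z * ∑ Ta : Finset (G.extractEdge e).E, ∑ Tb : Finset (G.extractEdge e).E,
          term (G.extractEdge e) x y z Ta Tb := by
    rw [sum_avoid G e (fun A' => ∑ B' : Finset (G.deleteEdge e).E,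
        (if (¬ G.Meets e A' ∧ ¬ G.Meets e B') then
          term G x y z (A'.map (G.embDel e)) (insert e (B'.map (G.embDel e))) else 0))
      (fun S hS => Finset.sum_eq_zero fun B' _ => if_neg (fun hc => hc.1 hS))]
    rw [Finset.mul_sum]
    refine Finset.sum_congr rfl fun Ta _ => ?_
    have hTa : ¬ G.Meets e (Ta.map (G.jExt e)) := not_meets_jExt G e Ta
    have hcond : ∀ B' : Finset (G.deleteEdge e).E,
        (if (¬ G.Meets e (Ta.map (G.jExt e)) ∧ ¬ G.Meets e B') then
          term G x y z ((Ta.map (G.jExt e)).map (G.embDel e))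
            (insert e (B'.map (G.embDel e))) else 0)
        = (if ¬ G.Meets e B' then
            term G x y z ((Ta.map (G.jExt e)).map (G.embDel e))
              (insert e (B'.map (G.embDel e))) else 0) := by
      intro B'
      by_cases hB : G.Meets e B'
      · rw [if_neg (fun hc => hc.2 hB), if_neg (fun hc => hc hB)]
      · rw [if_pos ⟨hTa, hB⟩, if_pos hB]
    rw [Finset.sum_congr rfl fun B' _ => hcond B']
    rw [sum_avoid G e (fun B' => if ¬ G.Meets e B' then
        term G x y z ((Ta.map (G.jExt e)).map (G.embDel e))
          (insert e (B'.map (G.embDel e))) else 0)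
      (fun S hS => if_neg (fun hc => hc hS))]
    rw [Finset.mul_sum]
    refine Finset.sum_congr rfl fun Tb _ => ?_
    have hTb : ¬ G.Meets e (Tb.map (G.jExt e)) := not_meets_jExt G e Tb
    rw [if_pos hTb, Finset.map_map, Finset.map_map, jExt_trans]
    exact term_extract G e x y z Ta Tb
  have hmul : ∑ A' : Finset (G.deleteEdge e).E, ∑ B' : Finset (G.deleteEdge e).E,
        y * term (G.contractEdge e) x y z A' B'
      = y * ∑ A'' : Finset (G.contractEdge e).E, ∑ B'' : Finset (G.contractEdge e).E,
        term (G.contractEdge e) x y z A'' B'' := by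
    rw [Finset.mul_sum]
    exact Finset.sum_congr rfl fun A' _ => (Finset.mul_sum _ _ _).symm
  rw [e3, hmul]
  ring


open MvPolynomial Multigraph in
/-- For any finite multigraph `G` and edge `e`, the edge elimination
polynomial satisfies `ξ(G) = ξ(G₋ₑ) + y·ξ(G/e) + z·ξ(G†e)` in `ℤ[x,y,z]`. -/
theorem xi_edge_elimination (G : Multigraph) (e : G.E) :
    G.xi (X 0 : MvPolynomial (Fin 3) ℤ) (X 1) (X 2) =
      (G.deleteEdge e).xi (X 0) (X 1) (X 2)
        + X 1 * (G.contractEdge e).xi (X 0) (X 1) (X 2)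
        + X 2 * (G.extractEdge e).xi (X 0) (X 1) (X 2) := by
  exact xi_edge_elimination' G e
end

section
/- Let R be a commutative ring and let w, x, y, z ∈ R. Suppose f is an isomorphism-invariant function from finite multigraphs to R satisfying f(∅) = 1, f(E₁) = x, f(G₁ ⊕ G₂) = f(G₁)·f(G₂), and f(G) = w·f(G_{−e}) + y·f(G_{/e}) + z·f(G_{†e}) for every finite multigraph G and every edge e of G. Then z·(w − 1)·((w − 1)x² + xy + z) = 0 in R. In particular, if R = ℤ[w, x, y, z] with w, x, y, z algebraically independent indeterminates, then no such function f exists. -/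
/-- An isomorphism-invariant function on finite multigraphs. -/
def Multigraph.Invariant {R : Type*} (f : Multigraph → R) : Prop :=
  ∀ G H : Multigraph, Nonempty (G.Iso H) → f G = f H


namespace Multigraph

/-- The path with `n` edges on `n+1` vertices. -/
def pathG (n : ℕ) : Multigraph where
  V := Fin (n+1)
  E := Fin n
  ends := fun i => s(i.castSucc, i.succ)

def isoA : Iso ((pathG 1).deleteEdge ((0 : Fin 1) : (pathG 1).E))
    (singleVertex.disjUnion singleVertex) where
  vEquiv := show Fin 2 ≃ (Unit ⊕ Unit) from
    ⟨fun v => if v = 0 then .inl () else .inr (),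
     fun v => match v with | .inl _ => 0 | .inr _ => 1,
     by decide, by decide⟩
  eEquiv := show {e' : Fin 1 // e' ≠ 0} ≃ (Empty ⊕ Empty) from
    @Equiv.equivOfIsEmpty _ _ ⟨by decide⟩ ⟨by decide⟩
  ends_map := by decide

def isoB : Iso ((pathG 1).contractEdge ((0 : Fin 1) : (pathG 1).E)) singleVertex where
  vEquiv := show ({v : Fin 2 // v ∉ s(Fin.castSucc (0 : Fin 1), Fin.succ (0 : Fin 1))} ⊕ Unit)
      ≃ Unit from
    ⟨fun _ => (), fun _ => .inr (), by decide, by decide⟩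
  eEquiv := show {e' : Fin 1 // e' ≠ 0} ≃ Empty from
    @Equiv.equivOfIsEmpty _ _ ⟨by decide⟩ ⟨by decide⟩
  ends_map := by decide

def isoC : Iso ((pathG 1).extractEdge ((0 : Fin 1) : (pathG 1).E)) emptyGraph where
  vEquiv := @Equiv.equivOfIsEmpty _ _ ⟨by decide⟩ ⟨by decide⟩
  eEquiv := @Equiv.equivOfIsEmpty _ _ ⟨by decide⟩ ⟨by decide⟩
  ends_map := by decide

def isoD : Iso ((pathG 2).deleteEdge ((0 : Fin 2) : (pathG 2).E))
    (singleVertex.disjUnion (pathG 1)) where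
  vEquiv := show Fin 3 ≃ (Unit ⊕ Fin 2) from
    ⟨fun v => if v = 0 then .inl () else if v = 1 then .inr 0 else .inr 1,
     fun v => match v with | .inl _ => 0 | .inr j => if j = 0 then 1 else 2,
     by decide, by decide⟩
  eEquiv := show {e' : Fin 2 // e' ≠ 0} ≃ (Empty ⊕ Fin 1) from
    ⟨fun _ => .inr 0, fun _ => ⟨1, by decide⟩, by decide, by decide⟩
  ends_map := by decide

def isoE : Iso ((pathG 2).contractEdge ((0 : Fin 2) : (pathG 2).E)) (pathG 1) where
  vEquiv := show ({v : Fin 3 // v ∉ s(Fin.castSucc (0 : Fin 2), Fin.succ (0 : Fin 2))} ⊕ Unit)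
      ≃ Fin 2 from
    ⟨fun v => match v with | .inl _ => 1 | .inr _ => 0,
     fun v => if v = 0 then .inr () else .inl ⟨2, by decide⟩,
     by decide, by decide⟩
  eEquiv := show {e' : Fin 2 // e' ≠ 0} ≃ Fin 1 from
    ⟨fun _ => 0, fun _ => ⟨1, by decide⟩, by decide, by decide⟩
  ends_map := by decide

def isoF : Iso ((pathG 2).extractEdge ((0 : Fin 2) : (pathG 2).E)) singleVertex where
  vEquiv := show {v : Fin 3 // v ∉ s(Fin.castSucc (0 : Fin 2), Fin.succ (0 : Fin 2))} ≃ Unit from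
    ⟨fun _ => (), fun _ => ⟨2, by decide⟩, by decide, by decide⟩
  eEquiv := @Equiv.equivOfIsEmpty _ _ ⟨by decide⟩ ⟨by decide⟩
  ends_map := by decide

def isoG : Iso ((pathG 3).deleteEdge ((0 : Fin 3) : (pathG 3).E))
    (singleVertex.disjUnion (pathG 2)) where
  vEquiv := show Fin 4 ≃ (Unit ⊕ Fin 3) from
    ⟨fun v => if v = 0 then .inl () else if v = 1 then .inr 0 else if v = 2 then .inr 1
        else .inr 2,
     fun v => match v with
       | .inl _ => 0 | .inr j => if j = 0 then 1 else if j = 1 then 2 else 3,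
     by decide, by decide⟩
  eEquiv := show {e' : Fin 3 // e' ≠ 0} ≃ (Empty ⊕ Fin 2) from
    ⟨fun e => if e.val = 1 then .inr 0 else .inr 1,
     fun e => match e with
       | .inl x => x.elim | .inr j => if j = 0 then ⟨1, by decide⟩ else ⟨2, by decide⟩,
     by decide, by decide⟩
  ends_map := by decide

def isoH : Iso ((pathG 3).contractEdge ((0 : Fin 3) : (pathG 3).E)) (pathG 2) where
  vEquiv := show ({v : Fin 4 // v ∉ s(Fin.castSucc (0 : Fin 3), Fin.succ (0 : Fin 3))} ⊕ Unit)
      ≃ Fin 3 from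
    ⟨fun v => match v with | .inr _ => 0 | .inl x => if x.val = 2 then 1 else 2,
     fun v => if v = 0 then .inr () else if v = 1 then .inl ⟨2, by decide⟩
       else .inl ⟨3, by decide⟩,
     by decide, by decide⟩
  eEquiv := show {e' : Fin 3 // e' ≠ 0} ≃ Fin 2 from
    ⟨fun e => if e.val = 1 then 0 else 1,
     fun j => if j = 0 then ⟨1, by decide⟩ else ⟨2, by decide⟩,
     by decide, by decide⟩
  ends_map := by decide

instance decForallMemSym2 (n : ℕ) (z : Sym2 (pathG n).V) (P : Fin (n+1) → Prop)
    [DecidablePred P] : Decidable (∀ v : Fin (n+1), v ∈ z → P v) :=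
  @Fintype.decidableForallFintype _ _ (fun v => @instDecidableForall _ _ (Sym2.Mem.decidable (α := (pathG n).V) v z) inferInstance) _

instance decPredIsoI : DecidablePred (fun e' : Fin 3 => ∀ v : Fin 4, v ∈ (pathG 3).ends e' →
    v ∉ s(Fin.castSucc (0 : Fin 3), Fin.succ (0 : Fin 3))) := fun e' => decForallMemSym2 3 _ _

def isoI : Iso ((pathG 3).extractEdge ((0 : Fin 3) : (pathG 3).E)) (pathG 1) where
  vEquiv := show {v : Fin 4 // v ∉ s(Fin.castSucc (0 : Fin 3), Fin.succ (0 : Fin 3))} ≃ Fin 2 from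
    ⟨fun v => if v.val = 2 then 0 else 1,
     fun j => if j = 0 then ⟨2, by decide⟩ else ⟨3, by decide⟩,
     by decide, by decide⟩
  eEquiv := show {e' : Fin 3 // ∀ v : Fin 4, v ∈ (pathG 3).ends e' →
      v ∉ s(Fin.castSucc (0 : Fin 3), Fin.succ (0 : Fin 3))} ≃ Fin 1 from
    ⟨fun _ => 0, fun _ => ⟨2, by decide⟩, by decide, by decide⟩
  ends_map := by decide

def isoJ : Iso ((pathG 3).deleteEdge ((1 : Fin 3) : (pathG 3).E))
    ((pathG 1).disjUnion (pathG 1)) where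
  vEquiv := show Fin 4 ≃ (Fin 2 ⊕ Fin 2) from
    ⟨fun v => if v = 0 then .inl 0 else if v = 1 then .inl 1 else if v = 2 then .inr 0
        else .inr 1,
     fun v => match v with
       | .inl j => if j = 0 then 0 else 1 | .inr j => if j = 0 then 2 else 3,
     by decide, by decide⟩
  eEquiv := show {e' : Fin 3 // e' ≠ 1} ≃ (Fin 1 ⊕ Fin 1) from
    ⟨fun e => if e.val = 0 then .inl 0 else .inr 0,
     fun e => match e with
       | .inl _ => ⟨0, by decide⟩ | .inr _ => ⟨2, by decide⟩,
     by decide, by decide⟩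
  ends_map := by decide

def isoK : Iso ((pathG 3).contractEdge ((1 : Fin 3) : (pathG 3).E)) (pathG 2) where
  vEquiv := show ({v : Fin 4 // v ∉ s(Fin.castSucc (1 : Fin 3), Fin.succ (1 : Fin 3))} ⊕ Unit)
      ≃ Fin 3 from
    ⟨fun v => match v with | .inr _ => 1 | .inl x => if x.val = 0 then 0 else 2,
     fun v => if v = 1 then .inr () else if v = 0 then .inl ⟨0, by decide⟩
       else .inl ⟨3, by decide⟩,
     by decide, by decide⟩
  eEquiv := show {e' : Fin 3 // e' ≠ 1} ≃ Fin 2 from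
    ⟨fun e => if e.val = 0 then 0 else 1,
     fun j => if j = 0 then ⟨0, by decide⟩ else ⟨2, by decide⟩,
     by decide, by decide⟩
  ends_map := by decide

def isoL : Iso ((pathG 3).extractEdge ((1 : Fin 3) : (pathG 3).E))
    (singleVertex.disjUnion singleVertex) where
  vEquiv := show {v : Fin 4 // v ∉ s(Fin.castSucc (1 : Fin 3), Fin.succ (1 : Fin 3))}
      ≃ (Unit ⊕ Unit) from
    ⟨fun v => if v.val = 0 then .inl () else .inr (),
     fun v => match v with | .inl _ => ⟨0, by decide⟩ | .inr _ => ⟨3, by decide⟩,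
     by decide, by decide⟩
  eEquiv := @Equiv.equivOfIsEmpty _ _ ⟨by decide⟩ ⟨by decide⟩
  ends_map := by decide

end Multigraph

open MvPolynomial Multigraph in
/-- If `f` is an isomorphism-invariant, multiplicative function from
finite multigraphs to a commutative ring `R` with `f(∅)=1`, `f(E₁)=x`, satisfying
`f(G) = w·f(G₋ₑ) + y·f(G/e) + z·f(G†e)`, then `z(w−1)((w−1)x²+xy+z) = 0` in `R`.
In particular, for `R = ℤ[w,x,y,z]` no such `f` exists. -/
theorem general_recurrence_confluence_condition :
    (∀ (R : Type) [CommRing R], ∀ (w x y z : R) (f : Multigraph → R),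
      Multigraph.Invariant f →
      f Multigraph.emptyGraph = 1 →
      f Multigraph.singleVertex = x →
      (∀ G₁ G₂ : Multigraph, f (G₁.disjUnion G₂) = f G₁ * f G₂) →
      (∀ (G : Multigraph) (e : G.E),
        f G = w * f (G.deleteEdge e) + y * f (G.contractEdge e) + z * f (G.extractEdge e)) →
      z * (w - 1) * ((w - 1) * x ^ 2 + x * y + z) = 0)
    ∧ ¬ ∃ f : Multigraph → MvPolynomial (Fin 4) ℤ,
        Multigraph.Invariant f
        ∧ f Multigraph.emptyGraph = 1
        ∧ f Multigraph.singleVertex = X 1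
        ∧ (∀ G₁ G₂ : Multigraph, f (G₁.disjUnion G₂) = f G₁ * f G₂)
        ∧ (∀ (G : Multigraph) (e : G.E),
            f G = X 0 * f (G.deleteEdge e) + X 2 * f (G.contractEdge e)
              + X 3 * f (G.extractEdge e)) := by
  have main : ∀ (R : Type) [CommRing R], ∀ (w x y z : R) (f : Multigraph → R),
      Multigraph.Invariant f →
      f Multigraph.emptyGraph = 1 →
      f Multigraph.singleVertex = x →
      (∀ G₁ G₂ : Multigraph, f (G₁.disjUnion G₂) = f G₁ * f G₂) →
      (∀ (G : Multigraph) (e : G.E),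
        f G = w * f (G.deleteEdge e) + y * f (G.contractEdge e) + z * f (G.extractEdge e)) →
      z * (w - 1) * ((w - 1) * x ^ 2 + x * y + z) = 0 := by
    intro R _ w x y z f hinv h0 h1 hmul hrec
    have hK : f (pathG 1) = w * (x * x) + y * x + z := by
      rw [hrec (pathG 1) ((0 : Fin 1) : (pathG 1).E),
        hinv _ _ ⟨isoA⟩, hinv _ _ ⟨isoB⟩, hinv _ _ ⟨isoC⟩, hmul, h0, h1, mul_one]
    have hP : f (pathG 2) = w * (x * f (pathG 1)) + y * f (pathG 1) + z * x := by
      rw [hrec (pathG 2) ((0 : Fin 2) : (pathG 2).E),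
        hinv _ _ ⟨isoD⟩, hinv _ _ ⟨isoE⟩, hinv _ _ ⟨isoF⟩, hmul, h1]
    have h4a : f (pathG 3) = w * (x * f (pathG 2)) + y * f (pathG 2) + z * f (pathG 1) := by
      rw [hrec (pathG 3) ((0 : Fin 3) : (pathG 3).E),
        hinv _ _ ⟨isoG⟩, hinv _ _ ⟨isoH⟩, hinv _ _ ⟨isoI⟩, hmul, h1]
    have h4b : f (pathG 3)
        = w * (f (pathG 1) * f (pathG 1)) + y * f (pathG 2) + z * (x * x) := by
      rw [hrec (pathG 3) ((1 : Fin 3) : (pathG 3).E),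
        hinv _ _ ⟨isoJ⟩, hinv _ _ ⟨isoK⟩, hinv _ _ ⟨isoL⟩, hmul, hmul, h1]
    rw [hK] at hP h4a h4b
    rw [hP] at h4a h4b
    linear_combination h4a - h4b
  refine ⟨main, ?_⟩
  rintro ⟨f, hinv, h0, h1, hmul, hrec⟩
  have hz := main _ (X 0) (X 1) (X 2) (X 3) f hinv h0 h1 hmul hrec
  have h2 := congrArg (eval fun i : Fin 4 => if i = 3 then (1 : ℤ) else 0) hz
  simp at h2
end

section
/- Let R be a commutative ring and let w, x, y ∈ R. Define f(G) = Σ_{A ⊆ E} x^{k(A)} · y^{|A|} · w^{|E| − |A|} for every finite multigraph G = (V, E). Then f is isomorphism-invariant, f(∅) = 1, f(E₁) = x, f(G₁ ⊕ G₂) = f(G₁)·f(G₂), and f satisfies the recurrence f(G) = w·f(G_{−e}) + y·f(G_{/e}) + 0·f(G_{†e}) for every edge e of G. Consequently, the edge elimination recurrence with deletion coefficient w, contraction coefficient y, and extraction coefficient z = 0 is confluent, and the resulting invariant is w^{|E|}·Z(G, x, y/w) whenever w is invertible, where Z(G, q, v) = Σ_{A ⊆ E} q^{k(A)} v^{|A|}.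 -/
/-- `f(G) = Σ_{A ⊆ E} x^{k(A)} y^{|A|} w^{|E|−|A|}`. -/
noncomputable def Multigraph.sokalGen {R : Type*} [CommRing R] (w x y : R)
    (G : Multigraph) : R :=
  ∑ A : Finset G.E, x ^ G.k A * y ^ A.card * w ^ (Fintype.card G.E - A.card)

/-- The Sokal partition-function form of the Tutte polynomial,
`Z(G,q,v) = Σ_{A ⊆ E} q^{k(A)} v^{|A|}`. -/
noncomputable def Multigraph.sokal {R : Type*} [CommRing R] (G : Multigraph)
    (q v : R) : R :=
  ∑ A : Finset G.E, q ^ G.k A * v ^ A.card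

lemma card_quot_eq_of_maps {α β : Type*} (r : α → α → Prop) (s : β → β → Prop)
    (f : α → β) (g : β → α)
    (hf : ∀ a b, r a b → Quot.mk s (f a) = Quot.mk s (f b))
    (hg : ∀ a b, s a b → Quot.mk r (g a) = Quot.mk r (g b))
    (hgf : ∀ a, Quot.mk r (g (f a)) = Quot.mk r a)
    (hfg : ∀ b, Quot.mk s (f (g b)) = Quot.mk s b) :
    Nat.card (Quot r) = Nat.card (Quot s) := by
  refine Nat.card_congr ⟨Quot.lift (fun a => Quot.mk s (f a)) hf,
    Quot.lift (fun b => Quot.mk r (g b)) hg, ?_, ?_⟩ <;> intro q <;>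
    induction q using Quot.ind <;> simp [hgf, hfg]

namespace Multigraph

lemma subtype_map_ne {α : Type*} [DecidableEq α] (e : α) (A : Finset {a : α // a ≠ e}) :
    (A.map ⟨Subtype.val, Subtype.val_injective⟩).subtype (· ≠ e) = A := by
  ext ⟨a, ha⟩
  simp only [Finset.mem_subtype, Finset.mem_map, Function.Embedding.coeFn_mk]
  constructor
  · rintro ⟨⟨b, hb⟩, hbA, rfl⟩; exact hbA
  · intro h; exact ⟨⟨a, ha⟩, h, rfl⟩

lemma not_mem_map_ne {α : Type*} [DecidableEq α] (e : α) (A : Finset {a : α // a ≠ e}) :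
    e ∉ A.map ⟨Subtype.val, Subtype.val_injective⟩ := by
  intro h
  obtain ⟨⟨a, ha⟩, -, h⟩ := Finset.mem_map.mp h
  exact ha h

/-- Splitting a sum over all finsets of a fintype by membership of `e`. -/
lemma sum_finset_split {R : Type*} [AddCommMonoid R] {α : Type*} [Fintype α]
    [DecidableEq α] (e : α) (F : Finset α → R) :
    ∑ A : Finset α, F A
      = (∑ A : Finset {a : α // a ≠ e}, F (A.map ⟨Subtype.val, Subtype.val_injective⟩))
        + ∑ A : Finset {a : α // a ≠ e}, F (insert e (A.map ⟨Subtype.val, Subtype.val_injective⟩)) := by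
  classical
  have key : ∀ A : Finset α,
      (A.subtype (· ≠ e)).map ⟨Subtype.val, Subtype.val_injective⟩ = A.erase e := by
    intro A; ext a
    simp only [Finset.mem_map, Finset.mem_subtype, Function.Embedding.coeFn_mk,
      Finset.mem_erase]
    constructor
    · rintro ⟨⟨b, hb⟩, hbA, rfl⟩; exact ⟨hb, hbA⟩
    · rintro ⟨ha, hA⟩; exact ⟨⟨a, ha⟩, hA, rfl⟩
  rw [← Finset.sum_filter_add_sum_filter_not Finset.univ (fun A : Finset α => e ∈ A)]
  rw [add_comm]
  congr 1
  · refine Finset.sum_nbij' (fun A => A.subtype (· ≠ e))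
      (fun A => A.map ⟨Subtype.val, Subtype.val_injective⟩) ?_ ?_ ?_ ?_ ?_
    · intro A _; simp
    · intro A _
      simp only [Finset.mem_filter, Finset.mem_univ, true_and]
      exact not_mem_map_ne e A
    · intro A hA
      simp only [Finset.mem_filter, Finset.mem_univ, true_and] at hA
      show (A.subtype (· ≠ e)).map ⟨Subtype.val, Subtype.val_injective⟩ = A
      rw [key A, Finset.erase_eq_of_notMem hA]
    · intro A _; exact subtype_map_ne e A
    · intro A hA
      simp only [Finset.mem_filter, Finset.mem_univ, true_and] at hA
      show F A = F ((A.subtype (· ≠ e)).map ⟨Subtype.val, Subtype.val_injective⟩)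
      rw [key A, Finset.erase_eq_of_notMem hA]
  · refine Finset.sum_nbij' (fun A => A.subtype (· ≠ e))
      (fun A => insert e (A.map ⟨Subtype.val, Subtype.val_injective⟩)) ?_ ?_ ?_ ?_ ?_
    · intro A _; simp
    · intro A _; simp
    · intro A hA
      simp only [Finset.mem_filter, Finset.mem_univ, true_and] at hA
      show insert e ((A.subtype (· ≠ e)).map ⟨Subtype.val, Subtype.val_injective⟩) = A
      rw [key A, Finset.insert_erase hA]
    · intro A _
      show (insert e (A.map ⟨Subtype.val, Subtype.val_injective⟩)).subtype (· ≠ e) = A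
      have : (insert e (A.map ⟨Subtype.val, Subtype.val_injective⟩)).subtype (· ≠ e)
          = (A.map ⟨Subtype.val, Subtype.val_injective⟩).subtype (· ≠ e) := by
        ext ⟨a, ha⟩; simp [Finset.mem_subtype, Finset.mem_insert, ha]
      rw [this, subtype_map_ne e A]
    · intro A hA
      simp only [Finset.mem_filter, Finset.mem_univ, true_and] at hA
      show F A = F (insert e ((A.subtype (· ≠ e)).map ⟨Subtype.val, Subtype.val_injective⟩))
      rw [key A, Finset.insert_erase hA]

end Multigraph
namespace Multigraph

lemma k_deleteEdge (G : Multigraph) (e : G.E) (A : Finset {e' : G.E // e' ≠ e}) :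
    G.k (A.map ⟨Subtype.val, Subtype.val_injective⟩) = (G.deleteEdge e).k A := by
  refine card_quot_eq_of_maps _ _ (id : G.V → G.V) id ?_ ?_ (fun _ => rfl) (fun _ => rfl)
  · rintro a b ⟨e', he', hab⟩
    obtain ⟨e'', he''A, rfl⟩ := Finset.mem_map.mp he'
    exact Quot.sound ⟨e'', he''A, hab⟩
  · rintro a b ⟨e'', he''A, hab⟩
    exact Quot.sound ⟨e''.val, Finset.mem_map_of_mem _ he''A, hab⟩

lemma k_contractEdge (G : Multigraph) (e : G.E) (A : Finset {e' : G.E // e' ≠ e}) :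
    G.k (insert e (A.map ⟨Subtype.val, Subtype.val_injective⟩)) = (G.contractEdge e).k A := by
  classical
  set S : Finset G.E := insert e (A.map ⟨Subtype.val, Subtype.val_injective⟩) with hS
  set r : G.V → G.V → Prop := fun u v => ∃ e' ∈ S, G.ends e' = s(u, v) with hr
  set s' : (G.contractEdge e).V → (G.contractEdge e).V → Prop :=
    fun u v => ∃ e' ∈ A, (G.contractEdge e).ends e' = s(u, v) with hs'
  set π : G.V → (G.contractEdge e).V := fun v =>
    if h : v ∈ G.ends e then Sum.inr () else Sum.inl ⟨v, h⟩ with hπ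
  set u₀ : G.V := (G.ends e).out.1 with hu₀def
  have hu₀ : u₀ ∈ G.ends e := Sym2.out_fst_mem _
  set σ : (G.contractEdge e).V → G.V := Sum.elim Subtype.val (fun _ => u₀) with hσ
  have heS : e ∈ S := Finset.mem_insert_self _ _
  have hkey : ∀ v : G.V, v ∈ G.ends e → Quot.mk r v = Quot.mk r u₀ := by
    intro v hv
    obtain ⟨w, hw⟩ := Sym2.mem_iff_exists.mp hu₀
    rw [hw, Sym2.mem_iff] at hv
    rcases hv with rfl | rfl
    · rfl
    · exact Quot.sound ⟨e, heS, by rw [hw, Sym2.eq_swap]⟩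
  have hπσ : ∀ v : G.V, Quot.mk r (σ (π v)) = Quot.mk r v := by
    intro v
    by_cases h : v ∈ G.ends e
    · have : π v = Sum.inr () := by exact dif_pos h
      rw [this]
      exact (hkey v h).symm
    · have : π v = Sum.inl ⟨v, h⟩ := by exact dif_neg h
      rw [this]
      rfl
  refine card_quot_eq_of_maps r s' π σ ?_ ?_ hπσ ?_
  · rintro a b ⟨e', he'S, hab⟩
    rcases Finset.mem_insert.mp he'S with rfl | hmem
    · have ha : a ∈ G.ends e' := by rw [hab]; exact Sym2.mem_mk_left _ _
      have hb : b ∈ G.ends e' := by rw [hab]; exact Sym2.mem_mk_right _ _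
      have hπa : π a = Sum.inr () := by exact dif_pos ha
      have hπb : π b = Sum.inr () := by exact dif_pos hb
      rw [hπa, hπb]
    · obtain ⟨e'', he''A, rfl⟩ := Finset.mem_map.mp hmem
      refine Quot.sound ⟨e'', he''A, ?_⟩
      have hab' : G.ends e''.val = s(a, b) := hab
      show (G.ends e''.val).map _ = s(π a, π b)
      rw [hab']
      exact Sym2.map_pair_eq _ _ _
  · rintro a b ⟨e'', he''A, hab⟩
    obtain ⟨⟨u, v⟩, huv⟩ := Quot.exists_rep (G.ends e''.val)
    have hrel : Quot.mk r u = Quot.mk r v :=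
      Quot.sound ⟨e''.val, Finset.mem_insert_of_mem (Finset.mem_map_of_mem _ he''A),
        by rw [← huv]⟩
    have h2 : s(π u, π v) = s(a, b) := by
      rw [← hab]
      show _ = (G.ends e''.val).map _
      rw [← huv]
      exact (Sym2.map_pair_eq _ _ _).symm
    rcases Sym2.eq_iff.mp h2 with ⟨h3, h4⟩ | ⟨h3, h4⟩
    · calc Quot.mk r (σ a) = Quot.mk r (σ (π u)) := by rw [h3]
        _ = Quot.mk r u := hπσ u
        _ = Quot.mk r v := hrel
        _ = Quot.mk r (σ (π v)) := (hπσ v).symm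
        _ = Quot.mk r (σ b) := by rw [h4]
    · calc Quot.mk r (σ a) = Quot.mk r (σ (π v)) := by rw [h4]
        _ = Quot.mk r v := hπσ v
        _ = Quot.mk r u := hrel.symm
        _ = Quot.mk r (σ (π u)) := (hπσ u).symm
        _ = Quot.mk r (σ b) := by rw [h3]
  · rintro (⟨v, hv⟩ | x)
    · have : π (σ (Sum.inl ⟨v, hv⟩)) = Sum.inl ⟨v, hv⟩ := by exact dif_neg hv
      rw [this]
    · have : π (σ (Sum.inr x)) = Sum.inr () := by exact dif_pos hu₀
      rw [this]

lemma k_disjUnion (G₁ G₂ : Multigraph) (A : Finset (G₁.E ⊕ G₂.E)) :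
    (G₁.disjUnion G₂).k A = G₁.k A.toLeft + G₂.k A.toRight := by
  classical
  set r : (G₁.V ⊕ G₂.V) → (G₁.V ⊕ G₂.V) → Prop :=
    fun u v => ∃ e' ∈ A, (G₁.disjUnion G₂).ends e' = s(u, v) with hr
  set r₁ : G₁.V → G₁.V → Prop := fun u v => ∃ e' ∈ A.toLeft, G₁.ends e' = s(u, v) with hr₁
  set r₂ : G₂.V → G₂.V → Prop := fun u v => ∃ e' ∈ A.toRight, G₂.ends e' = s(u, v) with hr₂
  have hF : ∀ a b, r a b →
      (Sum.map (Quot.mk r₁) (Quot.mk r₂) a : Quot r₁ ⊕ Quot r₂)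
        = Sum.map (Quot.mk r₁) (Quot.mk r₂) b := by
    rintro a b ⟨e', he', hab⟩
    cases e' with
    | inl e₁ =>
      obtain ⟨⟨p, q⟩, hpq⟩ := Quot.exists_rep (G₁.ends e₁)
      have h2 : s(Sum.inl p, Sum.inl q) = s(a, b) := by
        rw [← hab]
        show _ = (G₁.ends e₁).map Sum.inl
        rw [← hpq]
        exact (Sym2.map_pair_eq _ _ _).symm
      have hpq' : Quot.mk r₁ p = Quot.mk r₁ q :=
        Quot.sound ⟨e₁, Finset.mem_toLeft.mpr he', hpq.symm⟩
      rcases Sym2.eq_iff.mp h2 with ⟨h3, h4⟩ | ⟨h3, h4⟩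
      · rw [← h3, ← h4, Sum.map_inl, Sum.map_inl, hpq']
      · rw [← h3, ← h4, Sum.map_inl, Sum.map_inl, hpq']
    | inr e₂ =>
      obtain ⟨⟨p, q⟩, hpq⟩ := Quot.exists_rep (G₂.ends e₂)
      have h2 : s(Sum.inr p, Sum.inr q) = s(a, b) := by
        rw [← hab]
        show _ = (G₂.ends e₂).map Sum.inr
        rw [← hpq]
        exact (Sym2.map_pair_eq _ _ _).symm
      have hpq' : Quot.mk r₂ p = Quot.mk r₂ q :=
        Quot.sound ⟨e₂, Finset.mem_toRight.mpr he', hpq.symm⟩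
      rcases Sym2.eq_iff.mp h2 with ⟨h3, h4⟩ | ⟨h3, h4⟩
      · rw [← h3, ← h4, Sum.map_inr, Sum.map_inr, hpq']
      · rw [← h3, ← h4, Sum.map_inr, Sum.map_inr, hpq']
  have h1 : ∀ u v : G₁.V, r₁ u v →
      Quot.mk r (Sum.inl u) = Quot.mk r (Sum.inl v) := by
    rintro u v ⟨e₁, he₁, h⟩
    refine Quot.sound ⟨Sum.inl e₁, Finset.mem_toLeft.mp he₁, ?_⟩
    show (G₁.ends e₁).map Sum.inl = _
    rw [h, Sym2.map_pair_eq]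
  have h2 : ∀ u v : G₂.V, r₂ u v →
      Quot.mk r (Sum.inr u) = Quot.mk r (Sum.inr v) := by
    rintro u v ⟨e₂, he₂, h⟩
    refine Quot.sound ⟨Sum.inr e₂, Finset.mem_toRight.mp he₂, ?_⟩
    show (G₂.ends e₂).map Sum.inr = _
    rw [h, Sym2.map_pair_eq]
  have main : Nat.card (Quot r) = Nat.card (Quot r₁ ⊕ Quot r₂) := by
    refine Nat.card_congr
      ⟨Quot.lift (Sum.map (Quot.mk r₁) (Quot.mk r₂)) hF,
        Sum.elim (Quot.lift (fun u => Quot.mk r (Sum.inl u)) (fun u v h => h1 u v h))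
          (Quot.lift (fun v => Quot.mk r (Sum.inr v)) (fun u v h => h2 u v h)), ?_, ?_⟩
    · intro q
      induction q using Quot.ind with
      | _ a => cases a <;> rfl
    · rintro (q₁ | q₂)
      · induction q₁ using Quot.ind with
        | _ u => rfl
      · induction q₂ using Quot.ind with
        | _ v => rfl
  rw [show (G₁.disjUnion G₂).k A = Nat.card (Quot r) from rfl, main, Nat.card_sum]
  rfl

end Multigraph
namespace Multigraph

lemma k_iso {G H : Multigraph} (φ : G.Iso H) (A : Finset G.E) :
    G.k A = H.k (A.map φ.eEquiv.toEmbedding) := by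
  refine card_quot_eq_of_maps _ _ φ.vEquiv φ.vEquiv.symm ?_ ?_ ?_ ?_
  · rintro a b ⟨e', he', hab⟩
    refine Quot.sound ⟨φ.eEquiv e', Finset.mem_map_of_mem _ he', ?_⟩
    rw [φ.ends_map, hab, Sym2.map_pair_eq]
  · rintro a b ⟨e'', he'', hab⟩
    obtain ⟨e', he', rfl⟩ := Finset.mem_map.mp he''
    refine Quot.sound ⟨e', he', ?_⟩
    have h2 : (G.ends e').map φ.vEquiv = s(a, b) := by
      rw [← φ.ends_map]; exact hab
    obtain ⟨⟨p, q⟩, hpq⟩ := Quot.exists_rep (G.ends e')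
    have h3 : s(φ.vEquiv p, φ.vEquiv q) = s(a, b) := by
      rw [← h2, ← hpq]
      exact (Sym2.map_pair_eq _ _ _).symm
    have hpq' : G.ends e' = s(p, q) := hpq.symm
    rcases Sym2.eq_iff.mp h3 with ⟨h4, h5⟩ | ⟨h4, h5⟩
    · rw [hpq', ← h4, ← h5, Equiv.symm_apply_apply, Equiv.symm_apply_apply]
    · rw [hpq', ← h4, ← h5, Equiv.symm_apply_apply, Equiv.symm_apply_apply, Sym2.eq_swap]
  · intro a; rw [Equiv.symm_apply_apply]
  · intro b; rw [Equiv.apply_symm_apply]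

lemma k_isEmpty (G : Multigraph) [IsEmpty G.V] (A : Finset G.E) : G.k A = 0 := by
  have : IsEmpty (Quot (fun u v : G.V => ∃ e ∈ A, G.ends e = s(u, v))) := by
    constructor
    intro q
    induction q using Quot.ind with
    | _ a => exact IsEmpty.elim ‹_› a
  exact Nat.card_of_isEmpty

lemma k_unit (G : Multigraph) [Unique G.V] (A : Finset G.E) : G.k A = 1 := by
  have : Subsingleton (Quot (fun u v : G.V => ∃ e ∈ A, G.ends e = s(u, v))) :=
    ⟨fun a b => by
      induction a using Quot.ind with
      | _ u =>
        induction b using Quot.ind with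
        | _ v => rw [Subsingleton.elim u v]⟩
  have : Nonempty (Quot (fun u v : G.V => ∃ e ∈ A, G.ends e = s(u, v))) :=
    ⟨Quot.mk _ default⟩
  exact Nat.card_unique

end Multigraph
namespace Multigraph

lemma sokalGen_invariant {R : Type*} [CommRing R] (w x y : R) :
    Multigraph.Invariant (Multigraph.sokalGen w x y) := by
  rintro G H ⟨φ⟩
  unfold Multigraph.sokalGen
  refine Fintype.sum_equiv φ.eEquiv.finsetCongr _ _ ?_
  intro A
  rw [Equiv.finsetCongr_apply, ← k_iso φ A, Finset.card_map,
    Fintype.card_congr φ.eEquiv]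

lemma sokalGen_empty {R : Type*} [CommRing R] (w x y : R) :
    Multigraph.emptyGraph.sokalGen w x y = 1 := by
  have hE : IsEmpty Multigraph.emptyGraph.E := inferInstanceAs (IsEmpty Empty)
  have hV : IsEmpty Multigraph.emptyGraph.V := inferInstanceAs (IsEmpty Empty)
  unfold Multigraph.sokalGen
  rw [show (Finset.univ : Finset (Finset Multigraph.emptyGraph.E)) = {∅} by
    ext A
    simp only [Finset.mem_univ, Finset.mem_singleton, true_iff]
    exact Finset.eq_empty_of_isEmpty A, Finset.sum_singleton]
  simp [Multigraph.k_isEmpty]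

lemma sokalGen_single {R : Type*} [CommRing R] (w x y : R) :
    Multigraph.singleVertex.sokalGen w x y = x := by
  have hE : IsEmpty Multigraph.singleVertex.E := inferInstanceAs (IsEmpty Empty)
  have hV : Unique Multigraph.singleVertex.V := inferInstanceAs (Unique Unit)
  unfold Multigraph.sokalGen
  rw [show (Finset.univ : Finset (Finset Multigraph.singleVertex.E)) = {∅} by
    ext A
    simp only [Finset.mem_univ, Finset.mem_singleton, true_iff]
    exact Finset.eq_empty_of_isEmpty A, Finset.sum_singleton]
  simp [Multigraph.k_unit]

lemma sokalGen_disjUnion {R : Type*} [CommRing R] (w x y : R) (G₁ G₂ : Multigraph) :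
    (G₁.disjUnion G₂).sokalGen w x y = G₁.sokalGen w x y * G₂.sokalGen w x y := by
  classical
  unfold Multigraph.sokalGen
  rw [Finset.sum_mul_sum]
  set F : Finset (G₁.disjUnion G₂).E → R := fun A =>
    x ^ (G₁.disjUnion G₂).k A * y ^ A.card
      * w ^ (Fintype.card (G₁.disjUnion G₂).E - A.card) with hF
  let d : Finset G₁.E × Finset G₂.E ≃ Finset (G₁.disjUnion G₂).E :=
    ⟨fun p => p.1.disjSum p.2, fun A => (A.toLeft, A.toRight),
      fun p => by simp, fun A => Finset.toLeft_disjSum_toRight⟩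
  have hd : ∑ p : Finset G₁.E × Finset G₂.E, F (d p) = ∑ A, F A :=
    Fintype.sum_equiv d _ _ (fun _ => rfl)
  rw [← hd, Fintype.sum_prod_type]
  refine Finset.sum_congr rfl fun A₁ _ => Finset.sum_congr rfl fun A₂ _ => ?_
  show F (A₁.disjSum A₂) = _
  rw [hF]
  simp only []
  have hcd : (A₁.disjSum A₂ : Finset (G₁.disjUnion G₂).E).card = A₁.card + A₂.card :=
    Finset.card_disjSum _ _
  rw [k_disjUnion, Finset.toLeft_disjSum, Finset.toRight_disjSum]
  erw [hcd]
  have hc : Fintype.card (G₁.disjUnion G₂).E = Fintype.card G₁.E + Fintype.card G₂.E :=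
    (Fintype.card_congr (Equiv.refl _)).trans (Fintype.card_sum)
  have h1 : A₁.card ≤ Fintype.card G₁.E := by
    simpa using Finset.card_le_univ A₁
  have h2 : A₂.card ≤ Fintype.card G₂.E := by
    simpa using Finset.card_le_univ A₂
  have h3 : Fintype.card (G₁.disjUnion G₂).E - (A₁.card + A₂.card)
      = (Fintype.card G₁.E - A₁.card) + (Fintype.card G₂.E - A₂.card) := by omega
  rw [h3, pow_add, pow_add, pow_add]
  ring

end Multigraph
namespace Multigraph

lemma sokalGen_rec {R : Type*} [CommRing R] (w x y : R) (G : Multigraph) (e : G.E) :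
    G.sokalGen w x y = w * (G.deleteEdge e).sokalGen w x y
      + y * (G.contractEdge e).sokalGen w x y
      + 0 * (G.extractEdge e).sokalGen w x y := by
  classical
  rw [zero_mul, add_zero]
  have hcard : Fintype.card G.E = Fintype.card {e' : G.E // e' ≠ e} + 1 := by
    have h1 : Fintype.card {x : G.E // ¬ x = e} = Fintype.card G.E - Fintype.card {x : G.E // x = e} :=
      Fintype.card_subtype_compl _
    have h2 : Fintype.card {x : G.E // x = e} = 1 := Fintype.card_subtype_eq e
    have h3 : 0 < Fintype.card G.E := Fintype.card_pos_iff.mpr ⟨e⟩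
    have h4 : Fintype.card {x : G.E // ¬ x = e} = Fintype.card {e' : G.E // e' ≠ e} := rfl
    omega
  have hdel : Fintype.card (G.deleteEdge e).E = Fintype.card {e' : G.E // e' ≠ e} :=
    Fintype.card_congr (Equiv.refl _)
  have hcon : Fintype.card (G.contractEdge e).E = Fintype.card {e' : G.E // e' ≠ e} :=
    Fintype.card_congr (Equiv.refl _)
  unfold Multigraph.sokalGen
  rw [sum_finset_split e
    (fun A => x ^ G.k A * y ^ A.card * w ^ (Fintype.card G.E - A.card))]
  rw [Finset.mul_sum, Finset.mul_sum]
  congr 1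
  · have hbr : ∑ A : Finset {e' : G.E // e' ≠ e},
        w * (x ^ (G.deleteEdge e).k A * y ^ A.card
          * w ^ (Fintype.card (G.deleteEdge e).E - A.card))
        = ∑ A : Finset (G.deleteEdge e).E,
        w * (x ^ (G.deleteEdge e).k A * y ^ A.card
          * w ^ (Fintype.card (G.deleteEdge e).E - A.card)) :=
      Fintype.sum_equiv (Equiv.refl _) _ _ (fun _ => rfl)
    rw [← hbr]
    refine Finset.sum_congr rfl fun A _ => ?_
    have ha : A.card ≤ Fintype.card {e' : G.E // e' ≠ e} := by
      simpa using Finset.card_le_univ A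
    rw [k_deleteEdge G e A, Finset.card_map]
    have h5 : Fintype.card G.E - A.card
        = (Fintype.card (G.deleteEdge e).E - A.card) + 1 := by omega
    rw [h5, pow_succ]
    ring
  · have hbr : ∑ A : Finset {e' : G.E // e' ≠ e},
        y * (x ^ (G.contractEdge e).k A * y ^ A.card
          * w ^ (Fintype.card (G.contractEdge e).E - A.card))
        = ∑ A : Finset (G.contractEdge e).E,
        y * (x ^ (G.contractEdge e).k A * y ^ A.card
          * w ^ (Fintype.card (G.contractEdge e).E - A.card)) :=
      Fintype.sum_equiv (Equiv.refl _) _ _ (fun _ => rfl)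
    rw [← hbr]
    refine Finset.sum_congr rfl fun A _ => ?_
    have ha : A.card ≤ Fintype.card {e' : G.E // e' ≠ e} := by
      simpa using Finset.card_le_univ A
    rw [k_contractEdge G e A,
      Finset.card_insert_of_notMem (not_mem_map_ne e A), Finset.card_map]
    have h5 : Fintype.card G.E - (A.card + 1)
        = Fintype.card (G.contractEdge e).E - A.card := by omega
    rw [h5, pow_succ]
    ring

lemma sokalGen_inv {R : Type*} [CommRing R] (w x y : R) (w' : R) (hw : w * w' = 1)
    (G : Multigraph) :
    G.sokalGen w x y = w ^ (Fintype.card G.E) * G.sokal x (y * w') := by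
  unfold Multigraph.sokalGen Multigraph.sokal
  rw [Finset.mul_sum]
  refine Finset.sum_congr rfl fun A _ => ?_
  have ha : A.card ≤ Fintype.card G.E := by simpa using Finset.card_le_univ A
  have key : w ^ (Fintype.card G.E - A.card) * (w * w') ^ A.card
      = w ^ (Fintype.card G.E - A.card) := by rw [hw, one_pow, mul_one]
  calc x ^ G.k A * y ^ A.card * w ^ (Fintype.card G.E - A.card)
      = x ^ G.k A * y ^ A.card
        * (w ^ (Fintype.card G.E - A.card) * (w * w') ^ A.card) := by rw [key]
    _ = (w ^ (Fintype.card G.E - A.card) * w ^ A.card)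
        * (x ^ G.k A * (y * w') ^ A.card) := by
          rw [mul_pow, mul_pow]; ring
    _ = w ^ (Fintype.card G.E) * (x ^ G.k A * (y * w') ^ A.card) := by
          rw [← pow_add]
          congr 2
          omega

end Multigraph
open Multigraph in
/-- The function `f(G) = Σ_{A⊆E} x^{k(A)} y^{|A|} w^{|E|−|A|}` is an
isomorphism-invariant, multiplicative function with `f(∅)=1`, `f(E₁)=x`, satisfying the
edge elimination recurrence with coefficients `(w, y, 0)`; hence that recurrence is
confluent, and the resulting invariant is `w^{|E|}·Z(G, x, y/w)` whenever `w` is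
invertible. -/
theorem sokalGen_properties (R : Type) [CommRing R] (w x y : R) :
    Multigraph.Invariant (Multigraph.sokalGen w x y)
    ∧ Multigraph.emptyGraph.sokalGen w x y = 1
    ∧ Multigraph.singleVertex.sokalGen w x y = x
    ∧ (∀ G₁ G₂ : Multigraph,
        (G₁.disjUnion G₂).sokalGen w x y = G₁.sokalGen w x y * G₂.sokalGen w x y)
    ∧ (∀ (G : Multigraph) (e : G.E),
        G.sokalGen w x y = w * (G.deleteEdge e).sokalGen w x y
          + y * (G.contractEdge e).sokalGen w x y
          + 0 * (G.extractEdge e).sokalGen w x y)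
    ∧ (∃ f : Multigraph → R,
        Multigraph.Invariant f
        ∧ f Multigraph.emptyGraph = 1
        ∧ f Multigraph.singleVertex = x
        ∧ (∀ G₁ G₂ : Multigraph, f (G₁.disjUnion G₂) = f G₁ * f G₂)
        ∧ (∀ (G : Multigraph) (e : G.E),
            f G = w * f (G.deleteEdge e) + y * f (G.contractEdge e)
              + 0 * f (G.extractEdge e)))
    ∧ (∀ w' : R, w * w' = 1 → ∀ G : Multigraph,
        G.sokalGen w x y = w ^ (Fintype.card G.E) * G.sokal x (y * w')) := by
  exact ⟨sokalGen_invariant w x y, sokalGen_empty w x y, sokalGen_single w x y,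
    sokalGen_disjUnion w x y, sokalGen_rec w x y,
    ⟨Multigraph.sokalGen w x y, sokalGen_invariant w x y, sokalGen_empty w x y,
      sokalGen_single w x y, sokalGen_disjUnion w x y, sokalGen_rec w x y⟩,
    fun w' hw G => sokalGen_inv w x y w' hw G⟩
end
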